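/- arXiv:1501.07775 — 8 statements merged into one kernel-verified Lean document; each statement's English description precedes it below -/
import Mathlib

section
/- Let q, n, m be natural numbers with q ≥ 1, let R be a symmetric q×q real matrix and let r ∈ ℝ^q. Then Σ over all functions t : {1,…,n} → {1,…,q} of (Π_{v=1}^n r_{t(v)}) · (Σ_{v=1}^n Σ_{w=1}^n R_{t(v),t(w)})^m equals Σ over all vectors n⃗ = (n_1,…,n_q) of nonnegative integers with n_1 + ⋯ + n_q = n of (n!/(n_1!⋯n_q!)) · (Π_{i=1}^q r_i^{n_i}) · (Σ_{i=1}^q Σ_{j=1}^q n_i n_j R_{i,j})^m. -/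
open Finset

/-- The count vector of a function `t`: `mgCnt t i` is the number of `v` with `t v = i`. -/
private def mgCnt {n q : ℕ} (t : Fin n → Fin q) : Fin q → ℕ :=
  fun i => (Finset.univ.filter fun v => t v = i).card

private lemma mgCnt_sum {n q : ℕ} (t : Fin n → Fin q) : ∑ i, mgCnt t i = n := by
  have h := Finset.card_eq_sum_card_fiberwise
    (f := t) (s := (Finset.univ : Finset (Fin n))) (t := (Finset.univ : Finset (Fin q)))
    fun v _ => Finset.mem_univ (t v)
  simpa [mgCnt] using h.symm

private lemma mgCnt_prod {n q : ℕ} {M : Type*} [CommMonoid M] (t : Fin n → Fin q)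
    (f : Fin q → M) : (∏ v, f (t v)) = ∏ i, f i ^ mgCnt t i := by
  rw [← Finset.prod_fiberwise_of_maps_to (fun v _ => Finset.mem_univ (t v)) (fun v => f (t v))]
  refine Finset.prod_congr rfl fun i _ => ?_
  calc ∏ v ∈ Finset.univ.filter (fun v => t v = i), f (t v)
      = ∏ _v ∈ Finset.univ.filter (fun v => t v = i), f i :=
        Finset.prod_congr rfl fun v hv => by rw [(Finset.mem_filter.1 hv).2]
    _ = f i ^ mgCnt t i := by rw [Finset.prod_const]; rfl

private lemma mgCnt_sum_real {n q : ℕ} (t : Fin n → Fin q) (f : Fin q → ℝ) :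
    (∑ v, f (t v)) = ∑ i, (mgCnt t i : ℝ) * f i := by
  rw [← Finset.sum_fiberwise_of_maps_to (fun v _ => Finset.mem_univ (t v)) (fun v => f (t v))]
  refine Finset.sum_congr rfl fun i _ => ?_
  calc ∑ v ∈ Finset.univ.filter (fun v => t v = i), f (t v)
      = ∑ _v ∈ Finset.univ.filter (fun v => t v = i), f i :=
        Finset.sum_congr rfl fun v hv => by rw [(Finset.mem_filter.1 hv).2]
    _ = (mgCnt t i : ℝ) * f i := by rw [Finset.sum_const, nsmul_eq_mul]; rfl

private lemma prod_X_pow_eq_monomial' {q : ℕ} (k : Fin q → ℕ) :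
    (∏ i : Fin q, (MvPolynomial.X i : MvPolynomial (Fin q) ℕ) ^ k i)
      = MvPolynomial.monomial (Finsupp.equivFunOnFinite.symm k) 1 := by
  classical
  rw [← MvPolynomial.prod_X_pow_eq_monomial]
  refine (Finset.prod_subset (Finset.subset_univ _) fun i _ hi => ?_).symm
  have : k i = 0 := by
    by_contra h
    exact hi (Finsupp.mem_support_iff.2 (by simpa using h))
  simp [this]

/-- The number of functions `Fin n → Fin q` with prescribed fiber cardinalities `c`
is the multinomial coefficient. -/
private lemma mgCnt_card_fiber {n q : ℕ} (c : Fin q → ℕ) (hc : ∑ i, c i = n) :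
    (Finset.univ.filter fun t : Fin n → Fin q => mgCnt t = c).card
      = Nat.multinomial Finset.univ c := by
  classical
  have h1 : ((∑ i : Fin q, MvPolynomial.X i : MvPolynomial (Fin q) ℕ)) ^ n
      = ∑ t : Fin n → Fin q,
          MvPolynomial.monomial (Finsupp.equivFunOnFinite.symm (mgCnt t)) 1 := by
    rw [show ((∑ i : Fin q, MvPolynomial.X i : MvPolynomial (Fin q) ℕ)) ^ n
        = ∏ _v : Fin n, (∑ i : Fin q, MvPolynomial.X i : MvPolynomial (Fin q) ℕ) by
      rw [Finset.prod_const, Finset.card_univ, Fintype.card_fin]]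
    rw [Finset.prod_univ_sum]
    refine Finset.sum_congr (by simp) fun t _ => ?_
    rw [mgCnt_prod t (fun i => (MvPolynomial.X i : MvPolynomial (Fin q) ℕ)),
      prod_X_pow_eq_monomial']
  have h2 : ((∑ i : Fin q, MvPolynomial.X i : MvPolynomial (Fin q) ℕ)) ^ n
      = ∑ k ∈ Finset.piAntidiag Finset.univ n,
          (Nat.multinomial Finset.univ k : MvPolynomial (Fin q) ℕ) *
            MvPolynomial.monomial (Finsupp.equivFunOnFinite.symm k) 1 := by
    rw [Finset.sum_pow_eq_sum_piAntidiag]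
    exact Finset.sum_congr rfl fun k _ => by rw [prod_X_pow_eq_monomial']
  have := congrArg (MvPolynomial.coeff (Finsupp.equivFunOnFinite.symm c)) (h1.symm.trans h2)
  rw [MvPolynomial.coeff_sum, MvPolynomial.coeff_sum] at this
  have hL : (∑ t : Fin n → Fin q, MvPolynomial.coeff (Finsupp.equivFunOnFinite.symm c)
      (MvPolynomial.monomial (Finsupp.equivFunOnFinite.symm (mgCnt t)) 1))
      = (Finset.univ.filter fun t : Fin n → Fin q => mgCnt t = c).card := by
    rw [Finset.card_filter]
    refine Finset.sum_congr rfl fun t _ => ?_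
    rw [MvPolynomial.coeff_monomial]
    simp [EmbeddingLike.apply_eq_iff_eq]
  have hR : (∑ k ∈ Finset.piAntidiag Finset.univ n,
      MvPolynomial.coeff (Finsupp.equivFunOnFinite.symm c)
        ((Nat.multinomial Finset.univ k : MvPolynomial (Fin q) ℕ) *
          MvPolynomial.monomial (Finsupp.equivFunOnFinite.symm k) 1))
      = Nat.multinomial Finset.univ c := by
    have hmem : c ∈ Finset.piAntidiag (Finset.univ : Finset (Fin q)) n := by
      rw [Finset.mem_piAntidiag]
      exact ⟨hc, fun i _ => Finset.mem_univ i⟩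
    rw [Finset.sum_congr rfl (fun k _ => ?_)]
    · rw [Finset.sum_ite_eq' _ c (fun k => Nat.multinomial Finset.univ k), if_pos hmem]
    · rw [show ((Nat.multinomial Finset.univ k : MvPolynomial (Fin q) ℕ))
          = MvPolynomial.C (Nat.multinomial Finset.univ k) by
        exact (MvPolynomial.C_eq_coe_nat _).symm]
      rw [MvPolynomial.coeff_C_mul, MvPolynomial.coeff_monomial]
      simp only [EmbeddingLike.apply_eq_iff_eq]
      by_cases h : k = c <;> simp [h]
  rw [hL, hR] at this
  exact this

theorem multigraph_exact_count (q n m : ℕ) (hq : 1 ≤ q)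
    (R : Matrix (Fin q) (Fin q) ℝ) (hR : R.IsSymm) (r : Fin q → ℝ) :
    (∑ t : Fin n → Fin q,
        (∏ v : Fin n, r (t v)) *
          (∑ v : Fin n, ∑ w : Fin n, R (t v) (t w)) ^ m) =
      ∑ c ∈ Finset.Nat.antidiagonalTuple q n,
        (Nat.multinomial Finset.univ c : ℝ) *
          (∏ i : Fin q, r i ^ c i) *
          (∑ i : Fin q, ∑ j : Fin q, (c i : ℝ) * (c j : ℝ) * R i j) ^ m := by
  classical
  rw [← Finset.sum_fiberwise_of_maps_to
    (g := fun t : Fin n → Fin q => mgCnt t)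
    (t := Finset.Nat.antidiagonalTuple q n)
    (fun t _ => Finset.Nat.mem_antidiagonalTuple.2 (mgCnt_sum t))]
  refine Finset.sum_congr rfl fun c hcmem => ?_
  have hc : ∑ i, c i = n := Finset.Nat.mem_antidiagonalTuple.1 hcmem
  have hterm : ∀ t ∈ Finset.univ.filter (fun t : Fin n → Fin q => mgCnt t = c),
      (∏ v : Fin n, r (t v)) * (∑ v : Fin n, ∑ w : Fin n, R (t v) (t w)) ^ m
        = (∏ i : Fin q, r i ^ c i) *
            (∑ i : Fin q, ∑ j : Fin q, (c i : ℝ) * (c j : ℝ) * R i j) ^ m := by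
    intro t ht
    have hct : mgCnt t = c := (Finset.mem_filter.1 ht).2
    congr 1
    · rw [mgCnt_prod t r, hct]
    · congr 1
      rw [mgCnt_sum_real t (fun i => ∑ w : Fin n, R i (t w)), hct]
      refine Finset.sum_congr rfl fun i _ => ?_
      rw [mgCnt_sum_real t (fun j => R i j), hct, Finset.mul_sum]
      exact Finset.sum_congr rfl fun j _ => by ring
  rw [Finset.sum_congr rfl hterm, Finset.sum_const, mgCnt_card_fiber c hc, nsmul_eq_mul, mul_assoc]
end

section
/- Let q, n, m be natural numbers with q ≥ 1, let R be a symmetric q×q real matrix and let r ∈ ℝ^q. Define SG_{R,r}(n,m) = Σ over all pairs (G, t), where G is a simple graph on vertex set {1,…,n} with exactly m edges and t : {1,…,n} → {1,…,q}, of (Π_{v=1}^n r_{t(v)}) · (Π_{{u,v} ∈ E(G)} R_{t(u),t(v)}). Then SG_{R,r}(n,m) equals the coefficient of w^m in the polynomial Σ over vectors n⃗ = (n_1,…,n_q) of nonnegative integers with n_1 + ⋯ + n_q = n of (n!/(n_1!⋯n_q!)) · (Π_{i=1}^q r_i^{n_i}) · Π_{1 ≤ i < j ≤ q} (1 + R_{i,j}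 w)^{n_i n_j} · Π_{i=1}^q (1 + R_{i,i} w)^{n_i (n_i − 1)/2}. -/
open Finset Polynomial

lemma coeff_prod_one_add {α : Type*} [DecidableEq α] (s : Finset α) (a : α → ℝ) :
    ∀ m : ℕ, (∏ p ∈ s, (1 + C (a p) * X)).coeff m = ∑ T ∈ s.powersetCard m, ∏ p ∈ T, a p := by
  induction s using Finset.induction_on with
  | empty =>
    intro m
    cases m with
    | zero => simp
    | succ m =>
      rw [Finset.powersetCard_eq_empty.2 (by simp)]
      simp [coeff_one]
  | insert _ _ hx ih =>
    rename_i x s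
    intro m
    rw [Finset.prod_insert hx]
    cases m with
    | zero =>
      rw [Polynomial.mul_coeff_zero]
      simp [ih 0]
    | succ m =>
      have expand : ((1 + C (a x) * X) * ∏ p ∈ s, (1 + C (a p) * X)).coeff (m + 1)
          = (∏ p ∈ s, (1 + C (a p) * X)).coeff (m + 1)
            + a x * (∏ p ∈ s, (1 + C (a p) * X)).coeff m := by
        rw [add_mul, one_mul, mul_assoc, coeff_add, coeff_C_mul, coeff_X_mul]
      rw [expand, ih, ih, Finset.powersetCard_succ_insert hx,
        Finset.sum_union, Finset.sum_image]
      · congr 1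
        rw [Finset.mul_sum]
        refine Finset.sum_congr rfl fun T hT => ?_
        rw [Finset.mem_powersetCard] at hT
        rw [Finset.prod_insert fun hc => hx (hT.1 hc)]
      · intro T hT U hU hTU
        rw [Finset.mem_coe, Finset.mem_powersetCard] at hT hU
        have : ∀ W : Finset α, W ⊆ s → (insert x W).erase x = W := fun W hW => by
          rw [Finset.erase_insert fun hc => hx (hW hc)]
        rw [← this T hT.1, ← this U hU.1, hTU]
      · rw [Finset.disjoint_left]
        rintro T hT hT2
        simp only [Finset.mem_image] at hT2
        obtain ⟨U, hU, rfl⟩ := hT2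
        rw [Finset.mem_powersetCard] at hT
        exact hx (hT.1 (Finset.mem_insert_self x U))


open scoped Classical in
noncomputable def edgePairs {n : ℕ} (G : SimpleGraph (Fin n)) : Finset (Fin n × Fin n) :=
  Finset.univ.filter fun p : Fin n × Fin n => p.1 < p.2 ∧ G.Adj p.1 p.2

open scoped Classical in
lemma ncard_eq_edgePairs {n : ℕ} (G : SimpleGraph (Fin n)) :
    G.edgeSet.ncard = (edgePairs G).card := by
  rw [Set.ncard_eq_toFinset_card']
  refine (Finset.card_bij (fun (p : Fin n × Fin n) _ => Sym2.mk p.1 p.2) ?_ ?_ ?_).symm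
  · rintro ⟨u, v⟩ hp
    simp only [edgePairs, Finset.mem_filter] at hp
    simp [SimpleGraph.mem_edgeSet, hp.2.2]
  · rintro ⟨u, v⟩ hp ⟨u', v'⟩ hp' h
    simp only [edgePairs, Finset.mem_filter] at hp hp'
    rw [Sym2.eq_iff] at h
    rcases h with ⟨rfl, rfl⟩ | ⟨rfl, rfl⟩
    · rfl
    · exact absurd (hp.2.1.trans hp'.2.1) (lt_irrefl _)
  · intro e he
    induction e with
    | _ u v =>
      rw [Set.mem_toFinset, SimpleGraph.mem_edgeSet] at he
      rcases lt_or_gt_of_ne he.ne with h | h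
      · exact ⟨(u, v), by simp [edgePairs, h, he], rfl⟩
      · exact ⟨(v, u), by simp [edgePairs, h, he.symm], Sym2.eq_swap⟩

open scoped Classical in
lemma edgePairs_fromRel {n : ℕ} (T : Finset (Fin n × Fin n))
    (hT : T ⊆ Finset.univ.filter fun p : Fin n × Fin n => p.1 < p.2) :
    edgePairs (SimpleGraph.fromRel fun u v => (u, v) ∈ T) = T := by
  ext ⟨u, v⟩
  simp only [edgePairs, Finset.mem_filter, Finset.mem_univ, true_and,
    SimpleGraph.fromRel_adj]
  constructor
  · rintro ⟨hlt, ⟨hne, h | h⟩⟩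
    · exact h
    · have := (Finset.mem_filter.1 (hT h)).2
      exact absurd (hlt.trans this) (lt_irrefl _)
  · intro h
    have hlt := (Finset.mem_filter.1 (hT h)).2
    exact ⟨hlt, hlt.ne, Or.inl h⟩

open scoped Classical in
lemma fromRel_edgePairs {n : ℕ} (G : SimpleGraph (Fin n)) :
    (SimpleGraph.fromRel fun u v => (u, v) ∈ edgePairs G) = G := by
  ext u v
  simp only [SimpleGraph.fromRel_adj, edgePairs, Finset.mem_filter, Finset.mem_univ, true_and]
  constructor
  · rintro ⟨hne, ⟨_, h⟩ | ⟨_, h⟩⟩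
    · exact h
    · exact h.symm
  · intro h
    rcases lt_or_gt_of_ne h.ne with hlt | hlt
    · exact ⟨h.ne, Or.inl ⟨hlt, h⟩⟩
    · exact ⟨h.ne, Or.inr ⟨hlt, h.symm⟩⟩

open scoped Classical in
lemma graph_sum {n : ℕ} (F : SimpleGraph (Fin n) → ℝ) :
    ∑ G : SimpleGraph (Fin n), F G =
      ∑ T ∈ (Finset.univ.filter fun p : Fin n × Fin n => p.1 < p.2).powerset,
        F (SimpleGraph.fromRel fun u v => (u, v) ∈ T) := by
  refine Finset.sum_nbij' (fun G => edgePairs G)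
    (fun T => SimpleGraph.fromRel fun u v => (u, v) ∈ T) ?_ ?_ ?_ ?_ ?_
  · intro G _
    simp only [Finset.mem_powerset, edgePairs]
    intro p hp
    rw [Finset.mem_filter] at hp ⊢
    exact ⟨hp.1, hp.2.1⟩
  · intro T _; exact Finset.mem_univ _
  · intro G _; exact fromRel_edgePairs G
  · intro T hT; exact edgePairs_fromRel T (Finset.mem_powerset.mp hT)
  · intro G _; exact congrArg F (fromRel_edgePairs G).symm


open scoped Classical in
lemma count_comp_prod {q n : ℕ} {M : Type*} [CommMonoid M] (t : Fin n → Fin q) (g : Fin q → M) :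
    ∏ v : Fin n, g (t v) = ∏ i : Fin q, g i ^ (Finset.univ.filter fun v => t v = i).card := by
  rw [← Finset.prod_fiberwise Finset.univ t (fun v => g (t v))]
  refine Finset.prod_congr rfl fun i _ => ?_
  rw [Finset.prod_congr rfl (fun v hv => by rw [(Finset.mem_filter.1 hv).2]),
    Finset.prod_const]

open scoped Classical in
lemma card_fiber_count (q n : ℕ) (c : Fin q → ℕ) (hc : ∑ i, c i = n) :
    (Finset.univ.filter fun t : Fin n → Fin q =>
       (fun i => (Finset.univ.filter fun v => t v = i).card) = c).card
    = Nat.multinomial Finset.univ c := by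
  classical
  set d : Fin q →₀ ℕ := Finsupp.equivFunOnFinite.symm c with hd
  have hmon : ∀ k : Fin q → ℕ, (∏ i : Fin q, (MvPolynomial.X i : MvPolynomial (Fin q) ℕ) ^ k i)
      = MvPolynomial.monomial (Finsupp.equivFunOnFinite.symm k) 1 := by
    intro k
    rw [MvPolynomial.monomial_eq, Finsupp.prod_fintype _ _ (fun i => pow_zero _), map_one,
      one_mul]
    rfl
  have key : MvPolynomial.coeff d ((∑ i : Fin q, (MvPolynomial.X i : MvPolynomial (Fin q) ℕ)) ^ n)
      = (Finset.univ.filter fun t : Fin n → Fin q =>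
          (fun i => (Finset.univ.filter fun v => t v = i).card) = c).card := by
    rw [Fintype.sum_pow]
    rw [MvPolynomial.coeff_sum]
    rw [Finset.card_filter]
    refine Finset.sum_congr rfl fun t _ => ?_
    rw [count_comp_prod t, hmon, MvPolynomial.coeff_monomial]
    have : ((Finsupp.equivFunOnFinite.symm fun i => (Finset.univ.filter fun v => t v = i).card)
        = d) ↔ (fun i => (Finset.univ.filter fun v => t v = i).card) = c := by
      rw [hd, Equiv.apply_eq_iff_eq]
    split_ifs with h1 h2 h2 <;> simp_all [this]
  have key2 : MvPolynomial.coeff d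
      ((∑ i : Fin q, (MvPolynomial.X i : MvPolynomial (Fin q) ℕ)) ^ n)
      = Nat.multinomial Finset.univ c := by
    rw [Finset.sum_pow_eq_sum_piAntidiag]
    rw [MvPolynomial.coeff_sum]
    rw [Finset.sum_eq_single c]
    · rw [← MvPolynomial.C_eq_coe_nat, MvPolynomial.coeff_C_mul, hmon,
        MvPolynomial.coeff_monomial, if_pos rfl, mul_one, Nat.cast_id]
    · intro k _ hk
      rw [← MvPolynomial.C_eq_coe_nat, MvPolynomial.coeff_C_mul, hmon,
        MvPolynomial.coeff_monomial, if_neg, mul_zero]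
      intro h
      exact hk (Finsupp.equivFunOnFinite.symm.injective h)
    · intro h
      exact absurd (Finset.mem_piAntidiag.2 ⟨hc, fun i _ => Finset.mem_univ i⟩) h
  rw [← key, key2]

open scoped Classical in
lemma group_by_count {q n : ℕ} (F : (Fin q → ℕ) → ℝ) :
    ∑ t : Fin n → Fin q, F (fun i => (Finset.univ.filter fun v => t v = i).card)
      = ∑ c ∈ Finset.Nat.antidiagonalTuple q n,
          (Nat.multinomial Finset.univ c : ℝ) * F c := by
  have hmaps : ∀ t : Fin n → Fin q, t ∈ (Finset.univ : Finset (Fin n → Fin q)) →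
      (fun i => (Finset.univ.filter fun v => t v = i).card) ∈
        Finset.Nat.antidiagonalTuple q n := by
    intro t _
    rw [Finset.Nat.mem_antidiagonalTuple]
    rw [← Finset.card_eq_sum_card_fiberwise (fun v _ => Finset.mem_univ (t v))]
    exact Finset.card_fin n
  rw [← Finset.sum_fiberwise_of_maps_to hmaps
    (fun t => F (fun i => (Finset.univ.filter fun v => t v = i).card))]
  refine Finset.sum_congr rfl fun c hc => ?_
  have hsum : ∑ i, c i = n := Finset.Nat.mem_antidiagonalTuple.mp hc
  rw [Finset.sum_congr rfl (fun t ht => congrArg F (Finset.mem_filter.mp ht).2),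
    Finset.sum_const, card_fiber_count q n c hsum, nsmul_eq_mul]


lemma prod_pairs {ι M : Type*} [Fintype ι] [CommMonoid M] (Q : ι → ι → Prop)
    [∀ i, DecidablePred (Q i)] [DecidablePred fun p : ι × ι => Q p.1 p.2]
    (f : ι → ι → M) :
    ∏ i : ι, ∏ j ∈ Finset.univ.filter (fun j => Q i j), f i j
      = ∏ p ∈ Finset.univ.filter (fun p : ι × ι => Q p.1 p.2), f p.1 p.2 := by
  conv_rhs => rw [Finset.prod_filter, ← Finset.univ_product_univ, Finset.prod_product]
  refine Finset.prod_congr rfl fun i _ => ?_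
  rw [Finset.prod_filter]
  exact Finset.prod_congr rfl fun j _ => if_congr Iff.rfl rfl rfl

open scoped Classical in
lemma count_offdiag {q n : ℕ} (t : Fin n → Fin q) (i j : Fin q) (hij : i ≠ j) :
    (Finset.univ.filter fun p : Fin n × Fin n =>
        p.1 < p.2 ∧ t p.1 = i ∧ t p.2 = j).card
      + (Finset.univ.filter fun p : Fin n × Fin n =>
        p.1 < p.2 ∧ t p.1 = j ∧ t p.2 = i).card
      = (Finset.univ.filter fun v => t v = i).card
        * (Finset.univ.filter fun v => t v = j).card := by
  have h2 : (Finset.univ.filter fun p : Fin n × Fin n =>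
      p.1 < p.2 ∧ t p.1 = j ∧ t p.2 = i).card
      = (Finset.univ.filter fun p : Fin n × Fin n =>
      p.2 < p.1 ∧ t p.1 = i ∧ t p.2 = j).card := by
    refine Finset.card_nbij' Prod.swap Prod.swap ?_ ?_ ?_ ?_ <;>
      intro p hp <;> simp_all [Finset.mem_filter]
  rw [h2, ← Finset.card_union_of_disjoint, ← Finset.filter_or]
  · have hset : (Finset.univ.filter fun p : Fin n × Fin n =>
        (p.1 < p.2 ∧ t p.1 = i ∧ t p.2 = j) ∨ (p.2 < p.1 ∧ t p.1 = i ∧ t p.2 = j))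
        = (Finset.univ.filter fun v => t v = i) ×ˢ (Finset.univ.filter fun v => t v = j) := by
      ext ⟨u, v⟩
      simp only [Finset.mem_filter, Finset.mem_univ, true_and, Finset.mem_product]
      constructor
      · rintro (⟨_, h1, h2⟩ | ⟨_, h1, h2⟩) <;> exact ⟨h1, h2⟩
      · rintro ⟨h1, h2⟩
        have hne : u ≠ v := by rintro rfl; exact hij (h1.symm.trans h2)
        rcases lt_or_gt_of_ne hne with h | h
        · exact Or.inl ⟨h, h1, h2⟩
        · exact Or.inr ⟨h, h1, h2⟩
    rw [hset, Finset.card_product]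
  · rw [Finset.disjoint_filter]
    rintro p _ ⟨hlt, _⟩ ⟨hgt, _⟩
    exact absurd (hlt.trans hgt) (lt_irrefl _)

open scoped Classical in
lemma count_diag {q n : ℕ} (t : Fin n → Fin q) (i : Fin q) :
    (Finset.univ.filter fun p : Fin n × Fin n =>
        p.1 < p.2 ∧ t p.1 = i ∧ t p.2 = i).card
      = (Finset.univ.filter fun v => t v = i).card
        * ((Finset.univ.filter fun v => t v = i).card - 1) / 2 := by
  set c := (Finset.univ.filter fun v => t v = i).card with hc
  have h2 : (Finset.univ.filter fun p : Fin n × Fin n =>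
      p.1 < p.2 ∧ t p.1 = i ∧ t p.2 = i).card
      = (Finset.univ.filter fun p : Fin n × Fin n =>
      p.2 < p.1 ∧ t p.1 = i ∧ t p.2 = i).card := by
    refine Finset.card_nbij' Prod.swap Prod.swap ?_ ?_ ?_ ?_ <;>
      intro p hp <;> simp_all [Finset.mem_filter]
  have hkey : (Finset.univ.filter fun p : Fin n × Fin n =>
      p.1 < p.2 ∧ t p.1 = i ∧ t p.2 = i).card
      + (Finset.univ.filter fun p : Fin n × Fin n =>
      p.2 < p.1 ∧ t p.1 = i ∧ t p.2 = i).card = c * (c - 1) := by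
    rw [← Finset.card_union_of_disjoint, ← Finset.filter_or]
    · have hset : (Finset.univ.filter fun p : Fin n × Fin n =>
          (p.1 < p.2 ∧ t p.1 = i ∧ t p.2 = i) ∨ (p.2 < p.1 ∧ t p.1 = i ∧ t p.2 = i))
          = (Finset.univ.filter fun v => t v = i).offDiag := by
        ext ⟨u, v⟩
        simp only [Finset.mem_filter, Finset.mem_univ, true_and, Finset.mem_offDiag]
        constructor
        · rintro (⟨h, h1, h2⟩ | ⟨h, h1, h2⟩)
          · exact ⟨h1, h2, h.ne⟩
          · exact ⟨h1, h2, h.ne'⟩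
        · rintro ⟨h1, h2, hne⟩
          rcases lt_or_gt_of_ne hne with h | h
          · exact Or.inl ⟨h, h1, h2⟩
          · exact Or.inr ⟨h, h1, h2⟩
      rw [hset, Finset.offDiag_card, ← hc]
      cases c with
      | zero => simp
      | succ k =>
        have : (k + 1) * (k + 1) = (k + 1) * k + (k + 1) := by ring
        rw [this, Nat.add_sub_cancel, Nat.succ_sub_one]
    · rw [Finset.disjoint_filter]
      rintro p _ ⟨hlt, _⟩ ⟨hgt, _⟩
      exact absurd (hlt.trans hgt) (lt_irrefl _)
  omega


open scoped Classical in
lemma pair_prod {q n : ℕ} (R : Matrix (Fin q) (Fin q) ℝ) (hR : R.IsSymm)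
    (t : Fin n → Fin q) :
    ∏ p ∈ Finset.univ.filter (fun p : Fin n × Fin n => p.1 < p.2),
        (1 + Polynomial.C (R (t p.1) (t p.2)) * Polynomial.X)
      = (∏ i : Fin q, ∏ j ∈ Finset.univ.filter (fun j => i < j),
          (1 + Polynomial.C (R i j) * Polynomial.X)
            ^ ((Finset.univ.filter fun v => t v = i).card
              * (Finset.univ.filter fun v => t v = j).card)) *
        ∏ i : Fin q, (1 + Polynomial.C (R i i) * Polynomial.X)
            ^ ((Finset.univ.filter fun v => t v = i).card
              * ((Finset.univ.filter fun v => t v = i).card - 1) / 2) := by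
  set P := Finset.univ.filter (fun p : Fin n × Fin n => p.1 < p.2) with hP
  set N := fun (i j : Fin q) => (Finset.univ.filter fun p : Fin n × Fin n =>
      p.1 < p.2 ∧ t p.1 = i ∧ t p.2 = j).card with hN
  have step1 : ∏ p ∈ P, (1 + Polynomial.C (R (t p.1) (t p.2)) * Polynomial.X)
      = ∏ z : Fin q × Fin q, (1 + Polynomial.C (R z.1 z.2) * Polynomial.X) ^ N z.1 z.2 := by
    rw [← Finset.prod_fiberwise P (fun p => (t p.1, t p.2))
      (fun p => (1 + Polynomial.C (R (t p.1) (t p.2)) * Polynomial.X))]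
    refine Finset.prod_congr rfl fun z _ => ?_
    rw [Finset.prod_congr rfl (fun p hp => ?_), Finset.prod_const]
    · congr 1
      rw [hN, hP, Finset.filter_filter]
      congr 1
      ext p
      simp [Finset.mem_filter, Prod.ext_iff, and_assoc]
    · rw [Finset.mem_filter] at hp
      have h1 : t p.1 = z.1 := by rw [← hp.2]
      have h2 : t p.2 = z.2 := by rw [← hp.2]
      rw [h1, h2]
  rw [step1]
  rw [← Finset.univ_product_univ, Finset.prod_product]
  have split : ∀ i : Fin q, ∏ j : Fin q, (1 + Polynomial.C (R i j) * Polynomial.X) ^ N i j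
      = (∏ j ∈ Finset.univ.filter (fun j => i < j),
          (1 + Polynomial.C (R i j) * Polynomial.X) ^ N i j)
        * ((1 + Polynomial.C (R i i) * Polynomial.X) ^ N i i
        * ∏ j ∈ Finset.univ.filter (fun j => j < i),
          (1 + Polynomial.C (R i j) * Polynomial.X) ^ N i j) := by
    intro i
    rw [← Finset.prod_filter_mul_prod_filter_not Finset.univ (fun j => i < j)]
    congr 1
    have : Finset.univ.filter (fun j => ¬ i < j) =
        insert i (Finset.univ.filter (fun j : Fin q => j < i)) := by
      ext j
      simp only [Finset.mem_filter, Finset.mem_univ, true_and, Finset.mem_insert, not_lt]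
      constructor
      · intro h
        rcases eq_or_lt_of_le h with h | h
        · exact Or.inl h
        · exact Or.inr h
      · rintro (rfl | h)
        · exact le_refl _
        · exact h.le
    rw [this, Finset.prod_insert (by simp)]
  have hswap : ∏ i : Fin q, ∏ j ∈ Finset.univ.filter (fun j => j < i),
      (1 + Polynomial.C (R i j) * Polynomial.X) ^ N i j
      = ∏ i : Fin q, ∏ j ∈ Finset.univ.filter (fun j => i < j),
      (1 + Polynomial.C (R i j) * Polynomial.X) ^ N j i := by
    rw [prod_pairs (fun i j => j < i)
      (fun i j => (1 + Polynomial.C (R i j) * Polynomial.X) ^ N i j),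
      prod_pairs (fun i j => i < j)
      (fun i j => (1 + Polynomial.C (R i j) * Polynomial.X) ^ N j i)]
    refine Finset.prod_nbij' Prod.swap Prod.swap ?_ ?_ ?_ ?_ ?_
    · intro p hp; simp only [Finset.mem_filter, Finset.mem_univ, true_and] at hp ⊢; exact hp
    · intro p hp; simp only [Finset.mem_filter, Finset.mem_univ, true_and] at hp ⊢; exact hp
    · intro p _; rfl
    · intro p _; rfl
    · intro p _
      simp only [Prod.fst_swap, Prod.snd_swap]
      rw [hR.apply p.2 p.1]
  calc ∏ i : Fin q, ∏ j : Fin q, (1 + Polynomial.C (R i j) * Polynomial.X) ^ N i j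
      = (∏ i : Fin q, ∏ j ∈ Finset.univ.filter (fun j => i < j),
          (1 + Polynomial.C (R i j) * Polynomial.X) ^ N i j)
        * ((∏ i : Fin q, (1 + Polynomial.C (R i i) * Polynomial.X) ^ N i i)
        * ∏ i : Fin q, ∏ j ∈ Finset.univ.filter (fun j => j < i),
          (1 + Polynomial.C (R i j) * Polynomial.X) ^ N i j) := by
        rw [← Finset.prod_mul_distrib, ← Finset.prod_mul_distrib]
        exact Finset.prod_congr rfl fun i _ => split i
    _ = (∏ i : Fin q, ∏ j ∈ Finset.univ.filter (fun j => i < j),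
          (1 + Polynomial.C (R i j) * Polynomial.X) ^ (N i j + N j i))
        * ∏ i : Fin q, (1 + Polynomial.C (R i i) * Polynomial.X) ^ N i i := by
        rw [hswap]
        have expand : (∏ i : Fin q, ∏ j ∈ Finset.univ.filter (fun j => i < j),
            (1 + Polynomial.C (R i j) * Polynomial.X) ^ (N i j + N j i))
            = (∏ i : Fin q, ∏ j ∈ Finset.univ.filter (fun j => i < j),
              (1 + Polynomial.C (R i j) * Polynomial.X) ^ N i j)
            * ∏ i : Fin q, ∏ j ∈ Finset.univ.filter (fun j => i < j),
              (1 + Polynomial.C (R i j) * Polynomial.X) ^ N j i := by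
          simp_rw [pow_add, Finset.prod_mul_distrib]
        rw [expand]
        ring
    _ = _ := by
        congr 1
        · refine Finset.prod_congr rfl fun i _ => Finset.prod_congr rfl fun j hj => ?_
          rw [Finset.mem_filter] at hj
          congr 1
          exact count_offdiag t i j hj.2.ne
        · refine Finset.prod_congr rfl fun i _ => ?_
          congr 1
          exact count_diag t i

open scoped Classical in
lemma inner_graph_sum {q n : ℕ} (m : ℕ) (R : Matrix (Fin q) (Fin q) ℝ) (hR : R.IsSymm)
    (r : Fin q → ℝ) (t : Fin n → Fin q) :
    (∑ G : SimpleGraph (Fin n),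
      if G.edgeSet.ncard = m then
        (∏ v : Fin n, r (t v)) *
          ∏ u : Fin n, ∏ v ∈ Finset.univ.filter (fun v => u < v ∧ G.Adj u v), R (t u) (t v)
      else 0)
    = (∏ i : Fin q, r i ^ (Finset.univ.filter fun v => t v = i).card) *
      (((∏ i : Fin q, ∏ j ∈ Finset.univ.filter (fun j => i < j),
          (1 + Polynomial.C (R i j) * Polynomial.X)
            ^ ((Finset.univ.filter fun v => t v = i).card
              * (Finset.univ.filter fun v => t v = j).card)) *
        ∏ i : Fin q, (1 + Polynomial.C (R i i) * Polynomial.X)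
            ^ ((Finset.univ.filter fun v => t v = i).card
              * ((Finset.univ.filter fun v => t v = i).card - 1) / 2)).coeff m) := by
  rw [graph_sum (fun G => if G.edgeSet.ncard = m then
    (∏ v : Fin n, r (t v)) *
      ∏ u : Fin n, ∏ v ∈ Finset.univ.filter (fun v => u < v ∧ G.Adj u v), R (t u) (t v)
    else 0)]
  have hstep : ∀ T ∈ (Finset.univ.filter fun p : Fin n × Fin n => p.1 < p.2).powerset,
      (if (SimpleGraph.fromRel fun u v => (u, v) ∈ T).edgeSet.ncard = m then
        (∏ v : Fin n, r (t v)) *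
          ∏ u : Fin n, ∏ v ∈ Finset.univ.filter (fun v => u < v ∧
            (SimpleGraph.fromRel fun u v => (u, v) ∈ T).Adj u v), R (t u) (t v)
      else 0)
      = if T.card = m then (∏ v : Fin n, r (t v)) * ∏ p ∈ T, R (t p.1) (t p.2) else 0 := by
    intro T hT
    rw [Finset.mem_powerset] at hT
    rw [ncard_eq_edgePairs, edgePairs_fromRel T hT]
    refine if_congr Iff.rfl ?_ rfl
    congr 1
    rw [prod_pairs (fun u v => u < v ∧
      (SimpleGraph.fromRel fun u v => (u, v) ∈ T).Adj u v) (fun u v => R (t u) (t v))]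
    have hTfilter : (Finset.univ.filter fun p : Fin n × Fin n =>
        p.1 < p.2 ∧ (SimpleGraph.fromRel fun u v => (u, v) ∈ T).Adj p.1 p.2) = T := by
      ext ⟨u, v⟩
      simp only [Finset.mem_filter, Finset.mem_univ, true_and, SimpleGraph.fromRel_adj]
      constructor
      · rintro ⟨hlt, ⟨hne, h | h⟩⟩
        · exact h
        · exact absurd (hlt.trans (Finset.mem_filter.1 (hT h)).2) (lt_irrefl _)
      · intro h
        have hlt := (Finset.mem_filter.1 (hT h)).2
        exact ⟨hlt, hlt.ne, Or.inl h⟩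
    rw [hTfilter]
  trans ∑ T ∈ (Finset.univ.filter fun p : Fin n × Fin n => p.1 < p.2).powerset,
    if T.card = m then (∏ v : Fin n, r (t v)) * ∏ p ∈ T, R (t p.1) (t p.2) else 0
  · exact Finset.sum_congr rfl fun T hT => by convert hstep T hT
  rw [Finset.sum_ite, Finset.sum_const_zero, add_zero,
    ← Finset.powersetCard_eq_filter, ← Finset.mul_sum, ← coeff_prod_one_add,
    pair_prod R hR t, count_comp_prod t r]



open scoped Classical in
/-- The weighted number of simple `(n,m)`-`(R,r)`-graphs: the sum over pairs `(G,t)` of a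
simple graph on `Fin n` with `m` edges and a type assignment `t : Fin n → Fin q` of the
product of the vertex weights `r (t v)` and the edge weights `R (t u) (t v)`. -/
noncomputable def SG (q n : ℕ) (R : Matrix (Fin q) (Fin q) ℝ) (r : Fin q → ℝ) (m : ℕ) : ℝ :=
  ∑ G : SimpleGraph (Fin n), ∑ t : Fin n → Fin q,
    if G.edgeSet.ncard = m then
      (∏ v : Fin n, r (t v)) *
        ∏ u : Fin n, ∏ v ∈ Finset.univ.filter (fun v => u < v ∧ G.Adj u v), R (t u) (t v)
    else 0

theorem simple_graph_exact_count (q n m : ℕ) (hq : 1 ≤ q)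
    (R : Matrix (Fin q) (Fin q) ℝ) (hR : R.IsSymm) (r : Fin q → ℝ) :
    SG q n R r m =
      (∑ c ∈ Finset.Nat.antidiagonalTuple q n,
        Polynomial.C ((Nat.multinomial Finset.univ c : ℝ) * ∏ i : Fin q, r i ^ c i) *
          (∏ i : Fin q, ∏ j ∈ Finset.univ.filter (fun j => i < j),
            (1 + Polynomial.C (R i j) * Polynomial.X) ^ (c i * c j)) *
          ∏ i : Fin q,
            (1 + Polynomial.C (R i i) * Polynomial.X) ^ (c i * (c i - 1) / 2)).coeff m := by
  classical
  unfold SG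
  rw [Finset.sum_comm]
  rw [Finset.sum_congr rfl (fun t _ => inner_graph_sum m R hR r t)]
  rw [Polynomial.finset_sum_coeff]
  refine Eq.trans (group_by_count (fun c : Fin q → ℕ =>
    (∏ i : Fin q, r i ^ c i) *
      (((∏ i : Fin q, ∏ j ∈ Finset.univ.filter (fun j => i < j),
          (1 + Polynomial.C (R i j) * Polynomial.X) ^ (c i * c j)) *
        ∏ i : Fin q, (1 + Polynomial.C (R i i) * Polynomial.X)
          ^ (c i * (c i - 1) / 2)).coeff m))) ?_
  refine Finset.sum_congr rfl fun c hc => ?_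
  rw [mul_assoc, Polynomial.coeff_C_mul]
  ring
end

section
/- Let q ≥ 2 be an integer, R a symmetric q×q real matrix, c a nonzero real, and x ∈ ℝ^q with x_i > 0 for all i and Σ_i x_i = 1, setting s = xᵀRx and assuming s > 0. Let E be the q×(q−1) real matrix whose j-th column is e_j − e_q, let H = Eᵀ(diag(x)^{−1} + (2c/s)((2/s)·(Rx)(Rx)ᵀ − R))E, and assume the matrix I − (2c/s)·diag(x)R is invertible. Define C = (1/c)·((1−c)·𝟙ᵀ(I − (2c/s)·diag(x)R)^{−1} x − 1)·det(I − (2c/s)·diag(x)R), where 𝟙 is the all-ones vector. Then C = det(H) · Π_{i=1}^q x_i. -/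
open Matrix

/-- The `q × (q−1)` matrix whose `j`-th column is `e_j − e_q`. -/
def Emat (q : ℕ) : Matrix (Fin q) (Fin (q - 1)) ℝ :=
  fun i j => if (i : ℕ) = (j : ℕ) then 1 else if (i : ℕ) = q - 1 then -1 else 0

namespace CAux

lemma mul_vecMulVec {m n p : Type*} [Fintype n] (M : Matrix m n ℝ) (u : n → ℝ) (v : p → ℝ) :
    M * vecMulVec u v = vecMulVec (M *ᵥ u) v := by
  ext i j
  simp [Matrix.mul_apply, Matrix.vecMulVec_apply, Matrix.mulVec, dotProduct,
    Finset.sum_mul, mul_assoc]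

lemma vecMulVec_mul {m n p : Type*} [Fintype n] (u : m → ℝ) (v : n → ℝ) (M : Matrix n p ℝ) :
    vecMulVec u v * M = vecMulVec u (v ᵥ* M) := by
  ext i j
  simp [Matrix.mul_apply, Matrix.vecMulVec_apply, Matrix.vecMul, dotProduct,
    Finset.mul_sum, mul_assoc]

lemma vecMulVec_mulVec {m n : Type*} [Fintype n] (u : m → ℝ) (v : n → ℝ) (y : n → ℝ) :
    vecMulVec u v *ᵥ y = (v ⬝ᵥ y) • u := by
  ext i
  simp only [Matrix.vecMulVec_apply, Matrix.mulVec, dotProduct, Pi.smul_apply,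
    smul_eq_mul, Finset.sum_mul]
  exact Finset.sum_congr rfl fun j _ => by ring

lemma vecMulVec_zero_right {m n : Type*} (u : m → ℝ) :
    vecMulVec u (0 : n → ℝ) = 0 := by
  ext i j; simp [Matrix.vecMulVec_apply]

lemma vecMulVec_zero_left {m n : Type*} (v : n → ℝ) :
    vecMulVec (0 : m → ℝ) v = 0 := by
  ext i j; simp [Matrix.vecMulVec_apply]

end CAux

set_option maxHeartbeats 4000000 in
theorem C_eq_det_Hessian_mul_prod (q : ℕ) (hq : 2 ≤ q)
    (R : Matrix (Fin q) (Fin q) ℝ) (hsymm : R.IsSymm) (c : ℝ) (hc : c ≠ 0)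
    (x : Fin q → ℝ) (hx : ∀ i, 0 < x i) (hsum : ∑ i, x i = 1)
    (s : ℝ) (hs : s = ∑ i, ∑ j, x i * R i j * x j) (hspos : 0 < s)
    (H : Matrix (Fin (q - 1)) (Fin (q - 1)) ℝ)
    (hH : H = (Emat q)ᵀ *
      (Matrix.diagonal (fun i => (x i)⁻¹) +
        (2 * c / s) • ((2 / s) • vecMulVec (R *ᵥ x) (R *ᵥ x) - R)) * Emat q)
    (hinv : IsUnit ((1 : Matrix (Fin q) (Fin q) ℝ) -
      (2 * c / s) • (Matrix.diagonal x * R)).det)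
    (C : ℝ)
    (hC : C = (1 / c) *
      ((1 - c) *
        ((fun _ => (1 : ℝ)) ⬝ᵥ
          (((1 : Matrix (Fin q) (Fin q) ℝ) - (2 * c / s) • (Matrix.diagonal x * R))⁻¹ *ᵥ x))
        - 1) *
      ((1 : Matrix (Fin q) (Fin q) ℝ) - (2 * c / s) • (Matrix.diagonal x * R)).det) :
    C = H.det * ∏ i, x i := by
  obtain ⟨m, rfl⟩ : ∃ m, q = m + 1 := ⟨q - 1, by omega⟩
  have hs0 : s ≠ 0 := ne_of_gt hspos
  have hxne : ∀ i, x i ≠ 0 := fun i => (hx i).ne'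
  set v : Fin (m+1) → ℝ := R *ᵥ x with hv
  set E : Matrix (Fin (m+1)) (Fin m) ℝ := Emat (m+1) with hEdef
  set A : Matrix (Fin (m+1)) (Fin (m+1)) ℝ :=
    Matrix.diagonal (fun i => (x i)⁻¹) + (2 * c / s) • ((2 / s) • vecMulVec v v - R) with hAdef
  set B : Matrix (Fin (m+1)) (Fin (m+1)) ℝ :=
    (1 : Matrix (Fin (m+1)) (Fin (m+1)) ℝ) - (2 * c / s) • (Matrix.diagonal x * R) with hBdef
  set one : Fin (m+1) → ℝ := (fun _ => (1 : ℝ)) with honedef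
  set b : Fin (m+1) → ℝ := B⁻¹ *ᵥ x with hbdef
  set a : ℝ := one ⬝ᵥ b with hadef
  set w : Fin (m+1) → ℝ := fun j => 2 / s * v j - 1 with hwdef
  set A2 : Matrix (Fin (m+1)) (Fin (m+1)) ℝ :=
    A - (2 * c / s) • (vecMulVec v one + vecMulVec one v) + (2 * c) • vecMulVec one one
    with hA2def
  set M : Matrix (Fin (m+1)) (Fin (m+1)) ℝ :=
    vecMulVec (b - x) w + vecMulVec (c • b) (one - w) with hMdef
  have hBb : B *ᵥ b = x := by
    rw [hbdef, Matrix.mulVec_mulVec, Matrix.mul_nonsing_inv _ hinv, Matrix.one_mulVec]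
  have hBx : B *ᵥ x = x - (2 * c / s) • (Matrix.diagonal x *ᵥ v) := by
    rw [hBdef, Matrix.sub_mulVec, Matrix.one_mulVec, Matrix.smul_mulVec,
      ← Matrix.mulVec_mulVec, ← hv]
  have key : Matrix.diagonal x * A2 = B * (1 + M) := by
    have h1 : B * (1 + M) = B + vecMulVec ((2 * c / s) • (Matrix.diagonal x *ᵥ v)) w
        + vecMulVec (c • x) (one - w) := by
      rw [mul_add, mul_one, hMdef, mul_add, CAux.mul_vecMulVec, CAux.mul_vecMulVec,
        Matrix.mulVec_sub, hBb, hBx, Matrix.mulVec_smul, hBb, sub_sub_cancel, ← add_assoc]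
    rw [h1, hA2def, hAdef, hBdef]
    ext i j
    simp only [Matrix.diagonal_mul, Matrix.add_apply, Matrix.sub_apply, Matrix.smul_apply,
      smul_eq_mul, Matrix.vecMulVec_apply, Matrix.one_apply, Matrix.diagonal_apply,
      Matrix.mulVec_diagonal, Pi.smul_apply, Pi.sub_apply, honedef, hwdef]
    by_cases hij : i = j
    · subst hij
      simp only [if_pos rfl, ↓reduceIte]
      field_simp [hxne i]
      ring
    · simp only [if_neg hij]
      field_simp
      ring
  -- scalar facts
  have hox : one ⬝ᵥ x = 1 := by
    rw [honedef]; simpa [dotProduct] using hsum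
  have hvx : v ⬝ᵥ x = s := by
    rw [hs, hv]
    simp only [dotProduct, Matrix.mulVec, Finset.sum_mul]
    exact Finset.sum_congr rfl fun i _ => Finset.sum_congr rfl fun j _ => by ring
  have ha' : ∑ j, b j = a := by rw [hadef]; simp [honedef, dotProduct]
  have hswap : v ⬝ᵥ b = ∑ i, x i * (R *ᵥ b) i := by
    rw [hv]
    simp only [dotProduct, Matrix.mulVec, Finset.sum_mul, Finset.mul_sum]
    rw [Finset.sum_comm]
    refine Finset.sum_congr rfl fun i _ => Finset.sum_congr rfl fun j _ => ?_
    rw [hsymm.apply i j]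
    ring
  have hDRb : ∀ i, 2 * c / s * (x i * (R *ᵥ b) i) = b i - x i := by
    intro i
    have h := congrFun hBb i
    rw [hBdef, Matrix.sub_mulVec, Matrix.one_mulVec, Matrix.smul_mulVec,
      ← Matrix.mulVec_mulVec] at h
    simp only [Pi.sub_apply, Pi.smul_apply, smul_eq_mul, Matrix.mulVec_diagonal] at h
    linarith
  have hvb' : 2 * c * (v ⬝ᵥ b) = s * (a - 1) := by
    have h5 : ∑ i, (2 * c / s * (x i * (R *ᵥ b) i)) = ∑ i, (b i - x i) :=
      Finset.sum_congr rfl fun i _ => hDRb i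
    rw [Finset.sum_sub_distrib, ha', hsum, ← Finset.mul_sum] at h5
    rw [hswap]
    field_simp at h5
    linarith
  have hwb : w ⬝ᵥ b = (a - 1) / c - a := by
    have h6 : w ⬝ᵥ b = 2 / s * (v ⬝ᵥ b) - ∑ j, b j := by
      simp only [hwdef, dotProduct, sub_mul, one_mul, Finset.sum_sub_distrib,
        Finset.mul_sum, mul_assoc]
    rw [h6, ha']
    field_simp
    linear_combination hvb'
  have hwx : w ⬝ᵥ x = 1 := by
    have h6 : w ⬝ᵥ x = 2 / s * (v ⬝ᵥ x) - ∑ j, x j := by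
      simp only [hwdef, dotProduct, sub_mul, one_mul, Finset.sum_sub_distrib,
        Finset.mul_sum, mul_assoc]
    rw [h6, hvx, hsum]
    field_simp
    norm_num
  -- determinant of 1 + M
  set U : Matrix (Fin (m+1)) (Fin 2) ℝ := fun i k => if k = 0 then b i - x i else c * b i
    with hUdef
  set F2 : Matrix (Fin 2) (Fin (m+1)) ℝ := fun k j => if k = 0 then w j else 1 - w j
    with hF2def
  have hUF : U * F2 = M := by
    ext i j
    rw [hMdef, Matrix.mul_apply]
    simp [Matrix.mul_apply, Fin.sum_univ_two, hUdef, hF2def, Matrix.vecMulVec_apply, honedef, mul_assoc]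
  have h00 : (F2 * U) 0 0 = w ⬝ᵥ b - w ⬝ᵥ x := by
    have e : ∀ j, F2 0 j * U j 0 = w j * b j - w j * x j := by
      intro j
      simp only [hF2def, hUdef, if_pos rfl]
      ring
    rw [Matrix.mul_apply]
    calc ∑ j, F2 0 j * U j 0 = ∑ j, (w j * b j - w j * x j) :=
          Finset.sum_congr rfl fun j _ => e j
      _ = w ⬝ᵥ b - w ⬝ᵥ x := by
          rw [dotProduct, dotProduct, Finset.sum_sub_distrib]
  have h01 : (F2 * U) 0 1 = c * (w ⬝ᵥ b) := by
    have e : ∀ j, F2 0 j * U j 1 = c * (w j * b j) := by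
      intro j
      simp only [hF2def, hUdef, if_pos rfl, if_neg (show (1 : Fin 2) ≠ 0 by decide)]
      ring
    rw [Matrix.mul_apply]
    calc ∑ j, F2 0 j * U j 1 = ∑ j, c * (w j * b j) :=
          Finset.sum_congr rfl fun j _ => e j
      _ = c * (w ⬝ᵥ b) := by rw [dotProduct, Finset.mul_sum]
  have h10 : (F2 * U) 1 0 = (a - 1) - (w ⬝ᵥ b - w ⬝ᵥ x) := by
    have e : ∀ j, F2 1 j * U j 0 = (b j - x j) - (w j * b j - w j * x j) := by
      intro j
      simp only [hF2def, hUdef, if_pos rfl, if_neg (show (1 : Fin 2) ≠ 0 by decide)]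
      ring
    rw [Matrix.mul_apply]
    calc ∑ j, F2 1 j * U j 0 = ∑ j, ((b j - x j) - (w j * b j - w j * x j)) :=
          Finset.sum_congr rfl fun j _ => e j
      _ = (a - 1) - (w ⬝ᵥ b - w ⬝ᵥ x) := by
          rw [dotProduct, dotProduct]
          simp only [Finset.sum_sub_distrib, ha', hsum]
  have h11 : (F2 * U) 1 1 = c * (a - w ⬝ᵥ b) := by
    have e : ∀ j, F2 1 j * U j 1 = c * (b j - w j * b j) := by
      intro j
      simp only [hF2def, hUdef, if_pos rfl, if_neg (show (1 : Fin 2) ≠ 0 by decide)]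
      ring
    rw [Matrix.mul_apply]
    calc ∑ j, F2 1 j * U j 1 = ∑ j, c * (b j - w j * b j) :=
          Finset.sum_congr rfl fun j _ => e j
      _ = c * (a - w ⬝ᵥ b) := by
          rw [dotProduct, ← Finset.mul_sum]
          simp only [Finset.sum_sub_distrib, ha']
  have hdet1M : (1 + M).det = ((1 - c) * a - 1) / c := by
    rw [← hUF, Matrix.det_one_add_mul_comm, Matrix.det_fin_two]
    rw [Matrix.add_apply, Matrix.add_apply, Matrix.add_apply, Matrix.add_apply,
      Matrix.one_apply_eq, Matrix.one_apply_eq,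
      Matrix.one_apply_ne (show (0 : Fin 2) ≠ 1 by decide),
      Matrix.one_apply_ne (show (1 : Fin 2) ≠ 0 by decide),
      h00, h01, h10, h11, hwb, hwx]
    field_simp
    ring
  -- structural facts about A2
  have hA2x : A2 *ᵥ x = one := by
    rw [hA2def, hAdef]
    simp only [Matrix.add_mulVec, Matrix.sub_mulVec, Matrix.smul_mulVec,
      CAux.vecMulVec_mulVec, hvx, hox]
    funext i
    simp only [Pi.add_apply, Pi.sub_apply, Pi.smul_apply, smul_eq_mul,
      Matrix.mulVec_diagonal, honedef]
    field_simp [hxne i]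
    ring
  have hA2symm : A2ᵀ = A2 := by
    rw [hA2def, hAdef]
    ext i j
    simp only [Matrix.transpose_apply, Matrix.add_apply, Matrix.sub_apply, Matrix.smul_apply,
      Matrix.diagonal_apply, Matrix.vecMulVec_apply, smul_eq_mul, honedef]
    rw [hsymm.apply i j]
    by_cases h : i = j
    · subst h; ring
    · rw [if_neg (Ne.symm h), if_neg h]; ring
  have hxA2 : x ᵥ* A2 = one := by
    rw [← hA2symm, Matrix.vecMul_transpose, hA2x]
  -- column sums of E vanish
  have hcol0 : ∀ j : Fin m, ∑ i, E i j = 0 := by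
    intro j
    have hjm : (j : ℕ) < m := j.isLt
    have hsplit : ∀ i : Fin (m+1), E i j =
        (if i = (⟨(j : ℕ), by omega⟩ : Fin (m+1)) then (1:ℝ) else 0) +
        (if i = Fin.last m then (-1:ℝ) else 0) := by
      intro i
      rw [hEdef]
      simp only [Emat, Fin.ext_iff, Fin.val_last]
      by_cases h1 : (i : ℕ) = (j : ℕ)
      · rw [if_pos h1, if_pos h1, if_neg (by omega)]
        norm_num
      · rw [if_neg h1, if_neg h1]
        by_cases h2 : (i : ℕ) = m
        · rw [if_pos (by omega), if_pos h2]
          norm_num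
        · rw [if_neg (by omega), if_neg h2]
          norm_num
    rw [Finset.sum_congr rfl fun i _ => hsplit i, Finset.sum_add_distrib,
      Finset.sum_ite_eq' Finset.univ _ (fun _ => (1:ℝ)),
      Finset.sum_ite_eq' Finset.univ _ (fun _ => (-1:ℝ))]
    simp
  have hone_vE : one ᵥ* E = 0 := by
    funext j
    simp only [Matrix.vecMul, dotProduct, honedef, one_mul, Pi.zero_apply]
    exact hcol0 j
  have hEt1 : Eᵀ *ᵥ one = 0 := by
    funext j
    simp only [Matrix.mulVec, dotProduct, Matrix.transpose_apply, honedef, mul_one,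
      Pi.zero_apply]
    exact hcol0 j
  -- E^T A2 E = H
  have hEA2E : Eᵀ * A2 * E = H := by
    have hz1 : Eᵀ * (vecMulVec v one * E) = 0 := by
      rw [CAux.vecMulVec_mul, hone_vE, CAux.vecMulVec_zero_right, Matrix.mul_zero]
    have hz2 : Eᵀ * (vecMulVec one v * E) = 0 := by
      rw [CAux.vecMulVec_mul, CAux.mul_vecMulVec, hEt1, CAux.vecMulVec_zero_left]
    have hz3 : Eᵀ * (vecMulVec one one * E) = 0 := by
      rw [CAux.vecMulVec_mul, hone_vE, CAux.vecMulVec_zero_right, Matrix.mul_zero]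
    rw [hA2def, hH]
    simp only [Matrix.sub_mul, Matrix.add_mul, Matrix.smul_mul, Matrix.mul_sub, Matrix.mul_add,
      Matrix.mul_smul, Matrix.mul_assoc, hz1, hz2, hz3]
    simp
  -- bordered matrix
  set colx : Matrix (Fin (m+1)) (Fin 1) ℝ := Matrix.of fun i _ => x i with hcolxdef
  set ecol : Matrix (Fin (m+1)) (Fin 1) ℝ :=
    Matrix.of fun i _ => if (i : ℕ) = m then (1:ℝ) else 0 with hecoldef
  have hones : colxᵀ * A2 = Matrix.of fun (_ : Fin 1) i => (1:ℝ) := by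
    ext k i
    have h := congrFun hxA2 i
    simp only [Matrix.vecMul, dotProduct, honedef] at h
    simp only [Matrix.mul_apply, Matrix.transpose_apply, hcolxdef, Matrix.of_apply]
    exact h
  have hblocks : (fromCols E colx)ᵀ * A2 * fromCols E colx = fromBlocks H 0 0 1 := by
    rw [Matrix.transpose_fromCols, Matrix.fromRows_mul, Matrix.fromRows_mul_fromCols]
    have b12 : Eᵀ * A2 * colx = 0 := by
      have hvec : (Eᵀ * A2) *ᵥ x = 0 := by
        rw [← Matrix.mulVec_mulVec, hA2x, hEt1]
      ext j k
      have h := congrFun hvec j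
      simp only [Matrix.mulVec, dotProduct, Pi.zero_apply] at h
      simp only [Matrix.mul_apply, hcolxdef, Matrix.of_apply, Matrix.zero_apply]
      exact h
    have b21 : colxᵀ * A2 * E = 0 := by
      rw [hones]
      ext k j
      simp only [Matrix.mul_apply, Matrix.of_apply, one_mul, Matrix.zero_apply]
      exact hcol0 j
    have b22 : colxᵀ * A2 * colx = 1 := by
      rw [hones]
      ext k l
      have hkl : k = l := Subsingleton.elim k l
      subst hkl
      simp only [Matrix.mul_apply, Matrix.of_apply, hcolxdef, one_mul, Matrix.one_apply_eq]
      exact hsum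
    rw [hEA2E, b12, b21, b22]
  -- e.symm characterizations
  have hesymm_lt : ∀ (j : Fin (m+1)) (h : (j : ℕ) < m),
      (finSumFinEquiv.symm j : Fin m ⊕ Fin 1) = Sum.inl ⟨(j : ℕ), h⟩ := by
    intro j h
    rw [Equiv.symm_apply_eq, finSumFinEquiv_apply_left]
    exact Fin.ext rfl
  have hesymm_last : ∀ (j : Fin (m+1)) (h : (j : ℕ) = m),
      (finSumFinEquiv.symm j : Fin m ⊕ Fin 1) = Sum.inr 0 := by
    intro j h
    rw [Equiv.symm_apply_eq, finSumFinEquiv_apply_right]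
    exact Fin.ext (by simpa using h)
  -- column operations
  set Vs : Matrix (Fin m ⊕ Fin 1) (Fin m ⊕ Fin 1) ℝ :=
    fromBlocks 1 (Matrix.of fun j (_ : Fin 1) => -x (Fin.castSucc j)) 0 1 with hVsdef
  have hdetVs : Vs.det = 1 := by
    rw [hVsdef, Matrix.det_fromBlocks_zero₂₁]
    simp
  have hFV : fromCols E colx * Vs = fromCols E ecol := by
    rw [hVsdef, Matrix.fromCols_mul_fromBlocks, Matrix.fromCols_ext_iff]
    constructor
    · rw [Matrix.mul_one, Matrix.mul_zero, add_zero]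
    · rw [Matrix.mul_one]
      ext i k
      simp only [Matrix.add_apply, Matrix.mul_apply, hcolxdef, hecoldef, Matrix.of_apply]
      by_cases him : (i : ℕ) = m
      · have hEij : ∀ j : Fin m, E i j = -1 := by
          intro j
          rw [hEdef]
          simp only [Emat]
          rw [if_neg (by omega), if_pos (by omega)]
        have hxl : ∑ j : Fin m, x (Fin.castSucc j) = 1 - x (Fin.last m) := by
          have h := hsum
          rw [Fin.sum_univ_castSucc] at h
          linarith
        have hxi : x i = x (Fin.last m) := by
          congr 1
          exact Fin.ext (by simpa using him)
        have hsum2 : ∑ j : Fin m, E i j * (-x (Fin.castSucc j)) =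
            ∑ j : Fin m, x (Fin.castSucc j) :=
          Finset.sum_congr rfl fun j _ => by rw [hEij j]; ring
        rw [if_pos him, hsum2, hxl, hxi]
        ring
      · have hilt : (i : ℕ) < m := by omega
        have hterm : ∀ j : Fin m, E i j * (-x (Fin.castSucc j)) =
            if j = (⟨(i : ℕ), hilt⟩ : Fin m) then -x i else 0 := by
          intro j
          rw [hEdef]
          simp only [Emat]
          by_cases hji : (i : ℕ) = (j : ℕ)
          · rw [if_pos hji, if_pos (Fin.ext hji.symm)]
            have hxc : x (Fin.castSucc j) = x i := by
              congr 1
              exact Fin.ext (by simpa using hji.symm)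
            rw [hxc]
            ring
          · rw [if_neg hji, if_neg (by omega),
              if_neg (show j ≠ ⟨(i : ℕ), hilt⟩ by intro hh; apply hji; rw [hh])]
            ring
        have hsum2 : ∑ j : Fin m, E i j * (-x (Fin.castSucc j)) = -x i := by
          rw [Finset.sum_congr rfl fun j _ => hterm j,
            Finset.sum_ite_eq' Finset.univ _ (fun _ => -x i)]
          simp
        rw [if_neg him, hsum2]
        ring
  set P : Matrix (Fin (m+1)) (Fin (m+1)) ℝ :=
    (fromCols E colx).submatrix id (⇑finSumFinEquiv.symm) with hPdef
  have hMqdet : ((fromCols E ecol).submatrix id (⇑finSumFinEquiv.symm)).det = 1 := by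
    have htri : ((fromCols E ecol).submatrix id
        (⇑finSumFinEquiv.symm)).BlockTriangular OrderDual.toDual := by
      intro i j hij
      have hij' : (i : ℕ) < (j : ℕ) := hij
      rw [Matrix.submatrix_apply, id_eq]
      by_cases hjm : (j : ℕ) < m
      · rw [hesymm_lt j hjm, Matrix.fromCols_apply_inl]
        rw [hEdef]
        simp only [Emat, show (((⟨(j : ℕ), hjm⟩ : Fin m)) : ℕ) = (j : ℕ) from rfl]
        rw [if_neg (by omega), if_neg (by omega)]
      · have hjm' : (j : ℕ) = m := by omega
        rw [hesymm_last j hjm', Matrix.fromCols_apply_inr, hecoldef]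
        simp only [Matrix.of_apply]
        rw [if_neg (by omega)]
    rw [Matrix.det_of_lowerTriangular _ htri]
    apply Finset.prod_eq_one
    intro i _
    rw [Matrix.submatrix_apply, id_eq]
    by_cases him : (i : ℕ) < m
    · rw [hesymm_lt i him, Matrix.fromCols_apply_inl, hEdef]
      simp [Emat]
    · have him' : (i : ℕ) = m := by omega
      rw [hesymm_last i him', Matrix.fromCols_apply_inr, hecoldef]
      simp only [Matrix.of_apply]
      rw [if_pos him']
  have hPVs : P * Vs.submatrix (⇑finSumFinEquiv.symm) (⇑finSumFinEquiv.symm) =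
      (fromCols E ecol).submatrix id (⇑finSumFinEquiv.symm) := by
    rw [hPdef, Matrix.submatrix_mul_equiv (fromCols E colx) Vs id finSumFinEquiv.symm _, hFV]
  have hPdet : P.det = 1 := by
    have h := congrArg Matrix.det hPVs
    rw [Matrix.det_mul, Matrix.det_submatrix_equiv_self, hdetVs, mul_one, hMqdet] at h
    exact h
  have s1 : (fromCols E colx)ᵀ.submatrix (⇑finSumFinEquiv.symm) id * A2 =
      ((fromCols E colx)ᵀ * A2).submatrix (⇑finSumFinEquiv.symm) id := by
    have h := Matrix.submatrix_mul ((fromCols E colx)ᵀ) A2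
      (⇑finSumFinEquiv.symm) id id Function.bijective_id
    rw [Matrix.submatrix_id_id] at h
    exact h.symm
  have s2 : ((fromCols E colx)ᵀ * A2).submatrix (⇑finSumFinEquiv.symm) id *
      (fromCols E colx).submatrix id (⇑finSumFinEquiv.symm) =
      ((fromCols E colx)ᵀ * A2 * (fromCols E colx)).submatrix
        (⇑finSumFinEquiv.symm) (⇑finSumFinEquiv.symm) :=
    (Matrix.submatrix_mul _ _ _ id _ Function.bijective_id).symm
  have hsub : Pᵀ * A2 * P =
      ((fromCols E colx)ᵀ * A2 * (fromCols E colx)).submatrix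
        (⇑finSumFinEquiv.symm) (⇑finSumFinEquiv.symm) := by
    rw [hPdef, Matrix.transpose_submatrix, s1, s2]
  have hdetA2H : A2.det = H.det := by
    calc A2.det = (Pᵀ * A2 * P).det := by
          rw [Matrix.det_mul, Matrix.det_mul, Matrix.det_transpose, hPdet]
          ring
      _ = (((fromCols E colx)ᵀ * A2 * (fromCols E colx)).submatrix
            (⇑finSumFinEquiv.symm) (⇑finSumFinEquiv.symm)).det := by rw [hsub]
      _ = ((fromCols E colx)ᵀ * A2 * (fromCols E colx)).det :=
          Matrix.det_submatrix_equiv_self _ _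
      _ = (fromBlocks H 0 0 1).det := by rw [hblocks]
      _ = H.det := by rw [Matrix.det_fromBlocks_zero₂₁]; simp
  have hfinal : (∏ i, x i) * H.det = B.det * (((1 - c) * a - 1) / c) := by
    calc (∏ i, x i) * H.det = (∏ i, x i) * A2.det := by rw [hdetA2H]
      _ = (Matrix.diagonal x * A2).det := by rw [Matrix.det_mul, Matrix.det_diagonal]
      _ = (B * (1 + M)).det := by rw [key]
      _ = B.det * (((1 - c) * a - 1) / c) := by rw [Matrix.det_mul, hdet1M]
  rw [hC]
  linear_combination -hfinal
end

section
/- Let q ≥ 2 be an integer and let E be the q×(q−1) real matrix whose j-th column is e_j − e_q (i.e. E_{i,j} = 1 if i = j ≤ q−1, E_{q,j} = −1, and 0 otherwise). Then for every q×q real matrix M, det(EᵀME) = 𝟙ᵀ·adj(M)·𝟙, where adj(M) is the adjugate (transpose of the cofactor matrix) of M and 𝟙 is the all-ones vector. In particular, if M is invertible then det(EᵀME) = det(M) · (𝟙ᵀM^{−1}𝟙). -/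
open Matrix

theorem det_conj_Emat_eq_ones_adjugate_ones (q : ℕ) (hq : 2 ≤ q)
    (M : Matrix (Fin q) (Fin q) ℝ) :
    ((Emat q)ᵀ * M * Emat q).det =
      (fun _ => (1 : ℝ)) ⬝ᵥ (M.adjugate *ᵥ (fun _ => (1 : ℝ))) ∧
    (IsUnit M.det →
      ((Emat q)ᵀ * M * Emat q).det =
        M.det * ((fun _ => (1 : ℝ)) ⬝ᵥ (M⁻¹ *ᵥ (fun _ => (1 : ℝ))))) := by
  obtain ⟨n, rfl⟩ : ∃ n, q = n + 2 := ⟨q - 2, by omega⟩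
  -- the lower-triangular extension of Emat with an extra last column e_last
  set L : Matrix (Fin (n + 2)) (Fin (n + 2)) ℝ :=
    (fun i j => if (i : ℕ) = (j : ℕ) then 1 else if (i : ℕ) = n + 1 then -1 else 0) with hL
  have hpoint : ∀ i j, L i j = (if i = j then (1 : ℝ) else 0) +
      (if i = Fin.last (n + 1) ∧ j ≠ Fin.last (n + 1) then -1 else 0) := by
    intro i j
    simp only [hL, Fin.ext_iff, Fin.val_last, ne_eq]
    split_ifs <;> (try norm_num) <;> omega
  have hLdet : L.det = 1 := by
    rw [Matrix.det_of_lowerTriangular L]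
    · simp [hL]
    · intro i j hij
      have hlt : (i : ℕ) < (j : ℕ) := (OrderDual.toDual_lt_toDual (a := j)).mp hij
      have := j.isLt
      simp only [hL]
      rw [if_neg (by omega), if_neg (by omega)]
  have hLadj : L * adjugate L = 1 := by rw [mul_adjugate, hLdet, one_smul]
  have hones : Matrix.vecMul (fun _ => (1 : ℝ)) L = Pi.single (Fin.last (n + 1)) 1 := by
    funext j
    simp only [Matrix.vecMul, dotProduct, one_mul]
    rw [Finset.sum_congr rfl fun i _ => hpoint i j, Finset.sum_add_distrib]
    by_cases hj : j = Fin.last (n + 1)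
    · subst hj
      simp
    · simp [hj, Finset.sum_ite_eq, Finset.sum_ite_eq', Pi.single_eq_of_ne hj]
  have hrow : ∀ j, adjugate L (Fin.last (n + 1)) j = 1 := by
    intro j
    have h2 : Matrix.vecMul (Pi.single (Fin.last (n + 1)) (1 : ℝ)) (adjugate L) =
        fun _ => 1 := by
      rw [← hones, Matrix.vecMul_vecMul, hLadj, Matrix.vecMul_one]
    have h3 := congrFun h2 j
    rw [Matrix.single_vecMul] at h3
    simpa using h3
  have hadjT : ∀ k, adjugate Lᵀ k (Fin.last (n + 1)) = 1 := by
    intro k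
    rw [← Matrix.adjugate_transpose, Matrix.transpose_apply]
    exact hrow k
  have hsub : ∀ (i : Fin (n + 2)) (j : Fin (n + 1)),
      L i (Fin.castSucc j) = Emat (n + 2) i j := by
    intro i j
    simp only [hL, Emat, Fin.coe_castSucc, show n + 2 - 1 = n + 1 from rfl]
  have hsub2' : (Emat (n + 2))ᵀ * M * Emat (n + 2) =
      (Lᵀ * M * L).submatrix (Fin.last (n + 1)).succAbove (Fin.last (n + 1)).succAbove := by
    ext j k
    simp only [Matrix.submatrix_apply, Fin.succAbove_last, Matrix.mul_apply,
      Matrix.transpose_apply]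
    refine Finset.sum_congr rfl fun i _ => ?_
    rw [hsub i k]
    exact congrArg (· * Emat (n + 2) i k)
      (Finset.sum_congr rfl fun i' _ => by rw [hsub i' j])
  have key' : ((Lᵀ * M * L).submatrix (Fin.last (n + 1)).succAbove
      (Fin.last (n + 1)).succAbove).det =
      (fun _ => (1 : ℝ)) ⬝ᵥ (M.adjugate *ᵥ (fun _ => (1 : ℝ))) := by
    have hadj := Matrix.adjugate_fin_succ_eq_det_submatrix (Lᵀ * M * L)
      (Fin.last (n + 1)) (Fin.last (n + 1))
    have hsign : ((-1 : ℝ)) ^ ((Fin.last (n + 1) : ℕ) + (Fin.last (n + 1) : ℕ)) = 1 := by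
      rw [Fin.val_last, ← two_mul, pow_mul]
      norm_num
    rw [hsign, one_mul] at hadj
    rw [← hadj]
    rw [show Lᵀ * M * L = Lᵀ * (M * L) from Matrix.mul_assoc _ _ _,
      Matrix.adjugate_mul_distrib, Matrix.adjugate_mul_distrib]
    simp only [Matrix.mul_apply, dotProduct, Matrix.mulVec, hrow, hadjT,
      one_mul, mul_one]
    rw [Finset.sum_comm]
  have hinv : IsUnit M.det →
      (fun _ => (1 : ℝ)) ⬝ᵥ (M.adjugate *ᵥ (fun _ => (1 : ℝ))) =
      M.det * ((fun _ => (1 : ℝ)) ⬝ᵥ (M⁻¹ *ᵥ (fun _ => (1 : ℝ)))) := by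
    intro hM
    rw [Matrix.inv_def, Ring.inverse_eq_inv']
    simp only [Matrix.smul_mulVec, dotProduct_smul, smul_eq_mul]
    rw [← mul_assoc, mul_inv_cancel₀ hM.ne_zero, one_mul]
  constructor
  · rw [hsub2']
    exact key'
  · intro hM
    rw [hsub2']
    exact key'.trans (hinv hM)
end

section
/- Let q ≥ 2 be an integer and let E be the q×(q−1) real matrix whose j-th column is e_j − e_q. Then for every q×q real matrix M and every v ∈ ℝ^q, (𝟙ᵀv)² · det(M) = (vᵀMv + 1)·det(EᵀME) − det(Eᵀ(M + M v vᵀ M)E), where 𝟙 is the all-ones vector. (Equivalently: concatenating v as a last column to E yields a square matrix F with det(F) = 𝟙ᵀv, and det(FᵀMF) admits the stated block expansion.) -/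
open Matrix

lemma det_blocks {n : ℕ} (A : Matrix (Fin n) (Fin n) ℝ) (b c : Fin n → ℝ) (d : ℝ) :
    (fromBlocks A (replicateCol (Fin 1) b) (replicateRow (Fin 1) c) (of fun _ _ => d)).det
      = (d + 1) * A.det - (A + vecMulVec b c).det := by
  set N := fromBlocks A (replicateCol (Fin 1) b) (replicateRow (Fin 1) c) (of (fun _ _ => d) : Matrix (Fin 1) (Fin 1) ℝ) with hN
  have hrow : N = N.updateRow (Sum.inr 0)
      ((Sum.elim 0 (fun _ => d + 1) : Fin n ⊕ Fin 1 → ℝ) + Sum.elim c (fun _ => -1)) := by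
    rw [show ((Sum.elim 0 (fun _ => d + 1) : Fin n ⊕ Fin 1 → ℝ) + Sum.elim c (fun _ => -1))
        = N (Sum.inr 0) by funext x; rcases x with x | x <;> simp [hN, fromBlocks]]
    rw [Matrix.updateRow_eq_self]
  have h1 : N.updateRow (Sum.inr 0) (Sum.elim 0 (fun _ => d + 1))
      = fromBlocks A (replicateCol (Fin 1) b) 0 (of fun _ _ => d + 1) := by
    ext i j
    rcases i with i | i
    · rcases j with j | j <;> simp [hN, fromBlocks, Matrix.updateRow_apply]
    · have : i = 0 := Subsingleton.elim _ _
      subst this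
      rcases j with j | j <;> simp [hN, Matrix.updateRow_apply, fromBlocks]
  have h2 : N.updateRow (Sum.inr 0) (Sum.elim c (fun _ => -1))
      = fromBlocks A (replicateCol (Fin 1) b) (replicateRow (Fin 1) c) (of fun _ _ => -1) := by
    ext i j
    rcases i with i | i
    · rcases j with j | j <;> simp [hN, fromBlocks, Matrix.updateRow_apply]
    · have : i = 0 := Subsingleton.elim _ _
      subst this
      rcases j with j | j <;> simp [hN, Matrix.updateRow_apply, fromBlocks]
  have key : (fromBlocks (1 : Matrix (Fin n) (Fin n) ℝ) (replicateCol (Fin 1) b) 0 1)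
      * fromBlocks A (replicateCol (Fin 1) b) (replicateRow (Fin 1) c) (of fun _ _ => -1)
      = fromBlocks (A + vecMulVec b c) 0 (replicateRow (Fin 1) c) (of fun _ _ => -1) := by
    ext i j
    rcases i with i | i <;> rcases j with j | j <;>
      simp [mul_apply, Fintype.sum_sum_type, fromBlocks, Fin.sum_univ_one, one_apply,
        vecMulVec, ite_mul, Finset.sum_ite_eq, Finset.mul_sum, Fin.fin_one_eq_zero]
  have hdet2 : (fromBlocks A (replicateCol (Fin 1) b) (replicateRow (Fin 1) c)
      (of fun _ _ => (-1 : ℝ))).det = -(A + vecMulVec b c).det := by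
    have := congrArg Matrix.det key
    rw [det_mul, det_fromBlocks_zero₂₁, det_one, det_one, one_mul, one_mul,
      det_fromBlocks_zero₁₂] at this
    rw [this, det_fin_one]
    simp
  calc N.det = (N.updateRow (Sum.inr 0) (Sum.elim 0 (fun _ => d + 1))).det
        + (N.updateRow (Sum.inr 0) (Sum.elim c (fun _ => -1))).det := by
        conv_lhs => rw [hrow]
        exact det_updateRow_add N (Sum.inr 0) _ _
    _ = (d + 1) * A.det - (A + vecMulVec b c).det := by
        rw [h1, h2, hdet2, det_fromBlocks_zero₂₁, det_fin_one]
        simp only [of_apply]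
        ring

theorem block_determinant_identity (q : ℕ) (hq : 2 ≤ q)
    (M : Matrix (Fin q) (Fin q) ℝ) (v : Fin q → ℝ) :
    ((fun _ => (1 : ℝ)) ⬝ᵥ v) ^ 2 * M.det =
      (v ⬝ᵥ (M *ᵥ v) + 1) * ((Emat q)ᵀ * M * Emat q).det -
        ((Emat q)ᵀ * (M + M * vecMulVec v v * M) * Emat q).det := by
  obtain ⟨n, rfl⟩ : ∃ n, q = n + 1 := ⟨q - 1, by omega⟩
  have hE : Emat (n + 1) = (fun i j => if (i : ℕ) = (j : ℕ) then 1
      else if (i : ℕ) = n then -1 else 0 : Matrix (Fin (n+1)) (Fin n) ℝ) := rfl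
  set E : Matrix (Fin (n+1)) (Fin n) ℝ := Emat (n + 1) with hE'
  set e : Fin n ⊕ Fin 1 ≃ Fin (n + 1) := finSumFinEquiv with he
  set F' : Matrix (Fin (n+1)) (Fin (n+1)) ℝ :=
    (fromCols E (replicateCol (Fin 1) v)).submatrix id e.symm with hF'
  -- determinant of F'
  set L : Matrix (Fin (n+1)) (Fin (n+1)) ℝ :=
    of fun i j => if (i : ℕ) = n then (1 : ℝ) else if i = j then 1 else 0 with hLdef
  have hLdet : L.det = 1 := by
    rw [Matrix.det_of_lowerTriangular L (by
      intro i j hij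
      simp only [OrderDual.toDual_lt_toDual] at hij
      have h1 : (i : ℕ) ≠ n := by omega
      have h2 : i ≠ j := by omega
      simp [hLdef, h1, h2])]
    refine Finset.prod_eq_one fun i _ => ?_
    simp [hLdef]
  have hLF : (L * F').submatrix e e
      = fromBlocks 1 (replicateCol (Fin 1) (fun i : Fin n => v (Fin.castAdd 1 i))) 0
          (of fun _ _ => ∑ i, v i) := by
    ext a b
    have hent : ∀ (a : Fin n ⊕ Fin 1) (b : Fin n ⊕ Fin 1),
        (L * F').submatrix e e a b = ∑ k, L (e a) k * fromCols E (replicateCol (Fin 1) v) k b := by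
      intro a b
      simp [mul_apply, hF']
    rw [hent]
    rcases a with a | a
    · have ha : ((e (Sum.inl a) : Fin (n+1)) : ℕ) = (a : ℕ) := by simp [he]
      have hL1 : ∀ k, L (e (Sum.inl a)) k
          = if e (Sum.inl a) = k then 1 else 0 := by
        intro k
        have : ((e (Sum.inl a) : Fin (n+1)) : ℕ) ≠ n := by
          rw [ha]; exact Nat.ne_of_lt a.isLt
        simp [hLdef, this]
      simp only [hL1, ite_mul, one_mul, zero_mul, Finset.sum_ite_eq, Finset.mem_univ, if_true]
      rcases b with b | b
      · simp only [fromCols, of_apply, Sum.elim_inl, fromBlocks_apply₁₁]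
        rw [hE]
        have : ((e (Sum.inl a) : Fin (n+1)) : ℕ) ≠ n := by
          rw [ha]; exact Nat.ne_of_lt a.isLt
        simp only [this, if_false]
        by_cases hab : a = b
        · subst hab; simp [ha, one_apply]
        · have : ((e (Sum.inl a) : Fin (n+1)) : ℕ) ≠ (b : ℕ) := by
            rw [ha]; exact fun h => hab (Fin.ext h)
          simp [this, one_apply, hab]
      · have hb : b = 0 := Subsingleton.elim _ _
        subst hb
        simp [fromCols, fromBlocks, he, Fin.castAdd]
    · have ha : a = 0 := Subsingleton.elim _ _
      subst ha
      have ha' : ((e (Sum.inr 0) : Fin (n+1)) : ℕ) = n := by simp [he]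
      have hL1 : ∀ k, L (e (Sum.inr 0)) k = 1 := by intro k; simp [hLdef, ha']
      simp only [hL1, one_mul]
      rcases b with b | b
      · simp only [fromCols, of_apply, Sum.elim_inl, fromBlocks_apply₂₁, Matrix.zero_apply]
        rw [hE]
        have hsplit : ∀ k : Fin (n+1),
            (if (k : ℕ) = (b : ℕ) then (1:ℝ) else if (k : ℕ) = n then -1 else 0)
            = (if k = Fin.castAdd 1 b then (1:ℝ) else 0)
              + (if k = Fin.last n then (-1:ℝ) else 0) := by
          intro k
          have hbn : (b : ℕ) < n := b.isLt
          simp only [show (k = Fin.castAdd 1 b) ↔ ((k : ℕ) = (b : ℕ)) from by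
              rw [Fin.ext_iff]; simp,
            show (k = Fin.last n) ↔ ((k : ℕ) = n) from by rw [Fin.ext_iff]; simp]
          by_cases h1 : (k : ℕ) = (b : ℕ) <;> by_cases h2 : (k : ℕ) = n
          · exfalso; omega
          · have hb : ¬ ((b : ℕ) = n) := by omega
            simp [h1, h2, hb]
          · have hb : ¬ (n = (b : ℕ)) := by omega
            simp [h1, h2, hb]
          · simp [h1, h2]
        simp only [hsplit, Finset.sum_add_distrib, Finset.sum_ite_eq', Finset.mem_univ, if_true]
        ring
      · have hb : b = 0 := Subsingleton.elim _ _
        subst hb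
        simp [fromCols, fromBlocks]
  have hFdet : F'.det = ∑ i, v i := by
    have h1 : ((L * F').submatrix e e).det = (L * F').det := det_submatrix_equiv_self e _
    rw [hLF] at h1
    rw [det_fromBlocks_zero₂₁, det_one, one_mul, det_fin_one, of_apply] at h1
    have h2 : (L * F').det = L.det * F'.det := det_mul _ _
    rw [h2, hLdet, one_mul] at h1
    exact h1.symm
  -- the block structure of F'ᵀ * M * F'
  have hblock : F'ᵀ * M * F'
      = (fromBlocks (Eᵀ * M * E) (replicateCol (Fin 1) ((Eᵀ * M) *ᵥ v))
          (replicateRow (Fin 1) (v ᵥ* (M * E))) (of fun _ _ => v ⬝ᵥ (M *ᵥ v))).submatrix e.symm e.symm := by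
    have hT : F'ᵀ = (fromCols E (replicateCol (Fin 1) v))ᵀ.submatrix e.symm id := by
      rw [hF', transpose_submatrix]
    have hMsub : M = M.submatrix id id := by simp
    calc F'ᵀ * M * F'
        = (fromCols E (replicateCol (Fin 1) v))ᵀ.submatrix e.symm id * M.submatrix id id
            * (fromCols E (replicateCol (Fin 1) v)).submatrix id e.symm := by
          rw [hT, ← hMsub, hF']
      _ = ((fromCols E (replicateCol (Fin 1) v))ᵀ * M * fromCols E (replicateCol (Fin 1) v)).submatrix
            e.symm e.symm := by
          rw [← submatrix_mul _ _ e.symm id id Function.bijective_id,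
            ← submatrix_mul _ _ e.symm id e.symm Function.bijective_id]
      _ = _ := by
          rw [transpose_fromCols, transpose_replicateCol, fromRows_mul, fromRows_mul_fromCols]
          have c1 : Eᵀ * M * replicateCol (Fin 1) v = replicateCol (Fin 1) ((Eᵀ * M) *ᵥ v) :=
            (replicateCol_mulVec _ _).symm
          have c2 : replicateRow (Fin 1) v * M * E = replicateRow (Fin 1) (v ᵥ* (M * E)) := by
            rw [replicateRow_vecMul, Matrix.mul_assoc]
          have c3 : replicateRow (Fin 1) v * M * replicateCol (Fin 1) v = of fun _ _ => v ⬝ᵥ (M *ᵥ v) := by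
            rw [Matrix.mul_assoc, ← replicateCol_mulVec, replicateRow_mul_replicateCol]
          rw [c1, c2, c3]
  -- outer product identity
  have houter : Eᵀ * M * E + vecMulVec ((Eᵀ * M) *ᵥ v) (v ᵥ* (M * E))
      = Eᵀ * (M + M * vecMulVec v v * M) * E := by
    rw [vecMulVec_eq (Fin 1), replicateCol_mulVec, replicateRow_vecMul, vecMulVec_eq (Fin 1)]
    rw [Matrix.mul_add, Matrix.add_mul]
    congr 1
    simp only [Matrix.mul_assoc]
  have hd : ((fun _ => (1:ℝ)) ⬝ᵥ v) = ∑ i, v i := by simp [dotProduct]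
  calc ((fun _ => (1 : ℝ)) ⬝ᵥ v) ^ 2 * M.det
      = F'ᵀ.det * M.det * F'.det := by
        rw [det_transpose, hFdet, hd]; ring
    _ = (F'ᵀ * M * F').det := by rw [det_mul, det_mul]
    _ = (fromBlocks (Eᵀ * M * E) (replicateCol (Fin 1) ((Eᵀ * M) *ᵥ v))
          (replicateRow (Fin 1) (v ᵥ* (M * E))) (of fun _ _ => v ⬝ᵥ (M *ᵥ v))).det := by
        rw [hblock, det_submatrix_equiv_self]
    _ = (v ⬝ᵥ (M *ᵥ v) + 1) * (Eᵀ * M * E).det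
        - (Eᵀ * M * E + vecMulVec ((Eᵀ * M) *ᵥ v) (v ᵥ* (M * E))).det := det_blocks _ _ _ _
    _ = _ := by rw [houter]
end

section
/- Let q ≥ 2 be an integer, R a symmetric q×q real matrix with nonnegative entries, r ∈ ℝ^q with positive entries, and c > 0. Let S = {x ∈ ℝ^q : x_i ≥ 0 for all i, Σ_i x_i = 1} and define Φ_c : S → ℝ by Φ_c(x) = Σ_i x_i(log x_i − log r_i) − c·log(xᵀRx), with the convention 0·log 0 = 0. If φ ∈ S satisfies φᵀRφ > 0 and φ_i = 0 for some index i, then φ is not a local minimum of Φ_c on S: every neighborhood of φ in S contains a point y with yᵀRy > 0 and Φ_c(y) < Φ_c(φ). -/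
/-- The simplex `S = {x : x_i ≥ 0, Σ x_i = 1}`. -/
def simplex (q : ℕ) : Set (Fin q → ℝ) :=
  {x | (∀ i, 0 ≤ x i) ∧ ∑ i, x i = 1}

/-- `Φ_c(x) = Σ_i x_i (log x_i − log r_i) − c log(xᵀRx)` (with `0 log 0 = 0`, which is
automatic since `Real.log 0 = 0`). -/
noncomputable def Phi {q : ℕ} (R : Matrix (Fin q) (Fin q) ℝ) (r : Fin q → ℝ) (c : ℝ)
    (x : Fin q → ℝ) : ℝ :=
  (∑ i, x i * (Real.log (x i) - Real.log (r i))) -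
    c * Real.log (∑ i, ∑ j, x i * R i j * x j)

theorem no_local_minimum_on_boundary (q : ℕ) (hq : 2 ≤ q)
    (R : Matrix (Fin q) (Fin q) ℝ) (hsymm : R.IsSymm) (hnonneg : ∀ i j, 0 ≤ R i j)
    (r : Fin q → ℝ) (hr : ∀ i, 0 < r i) (c : ℝ) (hc : 0 < c)
    (phi : Fin q → ℝ) (hphi : phi ∈ simplex q)
    (hs : 0 < ∑ i, ∑ j, phi i * R i j * phi j)
    (hbd : ∃ i, phi i = 0) :
    ∀ V ∈ nhdsWithin phi (simplex q), ∃ y ∈ V, y ∈ simplex q ∧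
      0 < (∑ i, ∑ j, y i * R i j * y j) ∧ Phi R r c y < Phi R r c phi := by
  intro V hV
  obtain ⟨hpos, hsum1⟩ := hphi
  obtain ⟨i0, hi0⟩ := hbd
  -- find a positive coordinate
  have hexj : ∃ j, 0 < phi j := by
    by_contra h
    push_neg at h
    have : ∀ i, phi i = 0 := fun i => le_antisymm (h i) (hpos i)
    simp [this] at hsum1
  obtain ⟨j0, hj0⟩ := hexj
  have hij : i0 ≠ j0 := fun h => hj0.ne' (h ▸ hi0)
  -- the perturbation direction and path
  set v : Fin q → ℝ := fun i => (if i = i0 then (1:ℝ) else 0) - (if i = j0 then 1 else 0)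
    with hv
  set y : ℝ → Fin q → ℝ := fun t i => phi i + t * v i with hy
  have hy0 : y 0 = phi := by funext i; simp [hy]
  have hyi0 : ∀ t, y t i0 = t := by
    intro t; simp [hy, hv, hi0, hij]
  have hyj0 : ∀ t, y t j0 = phi j0 - t := by
    intro t; simp [hy, hv, hij.symm]; ring
  have hyother : ∀ t i, i ≠ i0 → i ≠ j0 → y t i = phi i := by
    intro t i h1 h2; simp [hy, hv, h1, h2]
  have hsumv : ∑ i, v i = 0 := by
    simp [hv, Finset.sum_sub_distrib]
  have hysum : ∀ t, ∑ i, y t i = 1 := by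
    intro t
    simp only [hy]
    rw [Finset.sum_add_distrib, ← Finset.mul_sum, hsumv, hsum1]
    ring
  -- quadratic form along the path
  set Q : (Fin q → ℝ) → ℝ := fun x => ∑ i, ∑ j, x i * R i j * x j with hQdef
  have hQphi : 0 < Q phi := hs
  have hydiff : ∀ i, Differentiable ℝ (fun t => y t i) := by
    intro i
    exact (differentiable_const _).add (differentiable_id.mul_const _)
  have hQdiff : Differentiable ℝ (fun t => Q (y t)) := by
    apply Differentiable.fun_sum; intro i _
    apply Differentiable.fun_sum; intro j _
    exact ((hydiff i).mul_const _).mul (hydiff j)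
  -- the smooth part of the variation
  set g : ℝ → ℝ := fun t =>
    -(t * Real.log (r i0)) +
      ((phi j0 - t) * (Real.log (phi j0 - t) - Real.log (r j0)) -
        phi j0 * (Real.log (phi j0) - Real.log (r j0))) -
      c * (Real.log (Q (y t)) - Real.log (Q phi)) with hg
  have hg0 : g 0 = 0 := by simp [hg, hy0]
  -- key identity
  have hkey : ∀ t, Phi R r c (y t) - Phi R r c phi = t * Real.log t + g t := by
    intro t
    have hsplit :
        (∑ i, y t i * (Real.log (y t i) - Real.log (r i))) -
          ∑ i, phi i * (Real.log (phi i) - Real.log (r i)) =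
        t * (Real.log t - Real.log (r i0)) +
          ((phi j0 - t) * (Real.log (phi j0 - t) - Real.log (r j0)) -
            phi j0 * (Real.log (phi j0) - Real.log (r j0))) := by
      rw [← Finset.sum_sub_distrib]
      have : ∀ i ∈ (Finset.univ : Finset (Fin q)), i ∉ ({i0, j0} : Finset (Fin q)) →
          y t i * (Real.log (y t i) - Real.log (r i)) -
            phi i * (Real.log (phi i) - Real.log (r i)) = 0 := by
        intro i _ hi
        simp only [Finset.mem_insert, Finset.mem_singleton, not_or] at hi
        rw [hyother t i hi.1 hi.2]; ring
      rw [← Finset.sum_subset (Finset.subset_univ ({i0, j0} : Finset (Fin q))) this,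
        Finset.sum_pair hij, hyi0, hyj0, hi0]
      simp [Real.log_zero]
    simp only [Phi, hg]
    rw [sub_sub_sub_comm, hsplit]
    ring
  -- differentiability of g at 0
  have hgdiff : DifferentiableAt ℝ g 0 := by
    have h1 : DifferentiableAt ℝ (fun t : ℝ => -(t * Real.log (r i0))) 0 :=
      (differentiable_id.mul_const _).neg 0
    have h2 : DifferentiableAt ℝ (fun t : ℝ => phi j0 - t) 0 :=
      (differentiable_const _).sub differentiable_id |>.differentiableAt
    have h2' : DifferentiableAt ℝ
        (fun t : ℝ => (phi j0 - t) * (Real.log (phi j0 - t) - Real.log (r j0)) -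
          phi j0 * (Real.log (phi j0) - Real.log (r j0))) 0 := by
      have hlog : DifferentiableAt ℝ (fun t : ℝ => Real.log (phi j0 - t)) 0 :=
        h2.log (by simpa using hj0.ne')
      exact ((h2.mul (hlog.sub (differentiableAt_const _))).sub (differentiableAt_const _))
    have h3 : DifferentiableAt ℝ
        (fun t : ℝ => c * (Real.log (Q (y t)) - Real.log (Q phi))) 0 := by
      have hlogQ : DifferentiableAt ℝ (fun t : ℝ => Real.log (Q (y t))) 0 :=
        (hQdiff 0).log (by rw [hy0]; exact hQphi.ne')
      exact (hlogQ.sub (differentiableAt_const _)).const_mul _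
    exact (h1.add h2').sub h3
  -- slope of g tends to a finite limit along 𝓝[>] 0
  have hslope : Filter.Tendsto (fun t => g t / t) (nhdsWithin 0 (Set.Ioi 0))
      (nhds (deriv g 0)) := by
    have := hasDerivAt_iff_tendsto_slope.1 hgdiff.hasDerivAt
    have hmono : nhdsWithin (0:ℝ) (Set.Ioi 0) ≤ nhdsWithin 0 {(0:ℝ)}ᶜ :=
      nhdsWithin_mono _ (fun x hx => ne_of_gt hx)
    refine (this.mono_left hmono).congr (fun t => ?_)
    simp [slope, hg0, div_eq_inv_mul]
  -- the dominant term: log t + g t / t → -∞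
  have hatBot : Filter.Tendsto (fun t => Real.log t + g t / t)
      (nhdsWithin 0 (Set.Ioi 0)) Filter.atBot := by
    apply Filter.tendsto_atBot_add_right_of_ge' _ (deriv g 0 + 1) Real.tendsto_log_nhdsGT_zero
    exact (hslope.eventually (eventually_le_nhds (lt_add_one _)))
  -- eventualities
  have E1 : ∀ᶠ t in nhdsWithin 0 (Set.Ioi 0), Real.log t + g t / t < 0 :=
    hatBot.eventually (Filter.eventually_lt_atBot 0)
  have E2 : ∀ᶠ t in nhdsWithin 0 (Set.Ioi 0), t ∈ Set.Ioo (0:ℝ) (phi j0) :=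
    Filter.eventually_of_mem (Ioo_mem_nhdsGT_of_mem ⟨le_refl 0, hj0⟩) (fun t ht => ht)
  have E3 : ∀ᶠ t in nhdsWithin 0 (Set.Ioi 0), 0 < Q (y t) := by
    have hcont : Filter.Tendsto (fun t => Q (y t)) (nhds 0) (nhds (Q phi)) := by
      have := (hQdiff.continuous.tendsto 0); rwa [hy0] at this
    exact (hcont.eventually (eventually_gt_nhds hQphi)).filter_mono nhdsWithin_le_nhds
  obtain ⟨U, hUopen, hUmem, hUsub⟩ := mem_nhdsWithin.1 hV
  have E4 : ∀ᶠ t in nhdsWithin 0 (Set.Ioi 0), y t ∈ U := by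
    have hycont : Continuous y := by
      apply continuous_pi; intro i
      exact continuous_const.add (continuous_id.mul continuous_const)
    have : Filter.Tendsto y (nhds 0) (nhds phi) := by
      have := hycont.tendsto 0; rwa [hy0] at this
    exact (this.eventually (hUopen.mem_nhds hUmem)).filter_mono nhdsWithin_le_nhds
  have : ∃ t, (Real.log t + g t / t < 0) ∧ t ∈ Set.Ioo (0:ℝ) (phi j0) ∧
      0 < Q (y t) ∧ y t ∈ U :=
    ((E1.and (E2.and (E3.and E4))).exists)
  obtain ⟨t, h1, ⟨ht0, htj⟩, h3, h4⟩ := this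
  -- y t is in the simplex
  have hyS : y t ∈ simplex q := by
    constructor
    · intro i
      by_cases hii : i = i0
      · rw [hii, hyi0]; exact ht0.le
      by_cases hij' : i = j0
      · rw [hij', hyj0]; linarith
      · rw [hyother t i hii hij']; exact hpos i
    · exact hysum t
  refine ⟨y t, hUsub ⟨h4, hyS⟩, hyS, h3, ?_⟩
  have hlt : t * Real.log t + g t < 0 := by
    have := mul_pos ht0 (neg_pos.2 h1)
    have ht' : t ≠ 0 := ht0.ne'
    calc t * Real.log t + g t = t * (Real.log t + g t / t) := by field_simp
    _ < 0 := mul_neg_of_pos_of_neg ht0 h1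
  have := hkey t
  linarith
end

section
/- Let q ≥ 2 be an integer, let R be a symmetric q×q real matrix with nonnegative entries that is irreducible, suppose the all-ones vector 𝟙 is an eigenvector of R with eigenvalue λ₁ equal to the largest eigenvalue of R, and assume all other eigenvalues of R are ≤ 0. Let c > 0, let S = {x ∈ ℝ^q : x_i ≥ 0 for all i, Σ_i x_i = 1}, and define Φ_c(x) = Σ_i x_i·log x_i − c·log(xᵀRx), with the convention 0·log 0 = 0. Then for every x ∈ S with xᵀRx > 0 and x ≠ 𝟙/q, one has Φ_c(x) > Φ_c(𝟙/q); that is, Φ_c attains a strict global minimum on {x ∈ S : xᵀRx > 0} at the barycenter 𝟙/q. -/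
open Matrix

/-- A symmetric matrix is irreducible if no nonempty proper subset `T` of the index set
satisfies `R i j = 0` for all `i ∈ T`, `j ∉ T`. -/
def MatrixIrreducible {q : ℕ} (R : Matrix (Fin q) (Fin q) ℝ) : Prop :=
  ∀ T : Finset (Fin q), T.Nonempty → T ≠ Finset.univ →
    ∃ i ∈ T, ∃ j ∉ T, R i j ≠ 0

/-- `Φ_c(x) = Σ_i x_i log x_i − c log(xᵀRx)` (with `0 log 0 = 0`, which is automatic
since `Real.log 0 = 0`). -/
noncomputable def PhiOne {q : ℕ} (R : Matrix (Fin q) (Fin q) ℝ) (c : ℝ)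
    (x : Fin q → ℝ) : ℝ :=
  (∑ i, x i * Real.log (x i)) - c * Real.log (∑ i, ∑ j, x i * R i j * x j)

section PhiAux

open Polynomial

lemma repr_dot {q : ℕ} (B : OrthonormalBasis (Fin q) ℝ (EuclideanSpace ℝ (Fin q)))
    (u v : EuclideanSpace ℝ (Fin q)) :
    ∑ i, u i * v i = ∑ i, B.repr u i * B.repr v i := by
  have h := B.repr.inner_map_map u v
  simp only [PiLp.inner_apply, RCLike.inner_apply, conj_trivial] at h
  simpa only [mul_comm] using h.symm

lemma repr_mulVec {q : ℕ} {R : Matrix (Fin q) (Fin q) ℝ} (hH : R.IsHermitian)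
    (hsymm : R.IsSymm) (v : EuclideanSpace ℝ (Fin q)) (i : Fin q) :
    hH.eigenvectorBasis.repr (WithLp.toLp 2 (R *ᵥ v : Fin q → ℝ)) i
      = hH.eigenvalues i * hH.eigenvectorBasis.repr v i := by
  rw [OrthonormalBasis.repr_apply_apply, OrthonormalBasis.repr_apply_apply]
  have h1 : (inner ℝ (hH.eigenvectorBasis i) (WithLp.toLp 2 (R *ᵥ v : Fin q → ℝ)) : ℝ)
      = (hH.eigenvectorBasis i : Fin q → ℝ) ⬝ᵥ (R *ᵥ v) := by
    simp [PiLp.inner_apply, RCLike.inner_apply, dotProduct, mul_comm]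
  have h2 : (inner ℝ (hH.eigenvectorBasis i) v : ℝ)
      = (hH.eigenvectorBasis i : Fin q → ℝ) ⬝ᵥ v := by
    simp [PiLp.inner_apply, RCLike.inner_apply, dotProduct, mul_comm]
  have h3 : R *ᵥ (hH.eigenvectorBasis i : Fin q → ℝ)
      = hH.eigenvalues i • (hH.eigenvectorBasis i : Fin q → ℝ) := hH.mulVec_eigenvectorBasis i
  rw [h1, h2, dotProduct_mulVec, ← mulVec_transpose, hsymm.eq, h3, smul_dotProduct]
  simp

lemma quad_eq_sum {q : ℕ} {R : Matrix (Fin q) (Fin q) ℝ} (hH : R.IsHermitian)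
    (hsymm : R.IsSymm) (v : Fin q → ℝ) :
    ∑ i, ∑ j, v i * R i j * v j
      = ∑ i, hH.eigenvalues i
          * (hH.eigenvectorBasis.repr (WithLp.toLp 2 v) i)^2 := by
  have h1 : ∑ i, ∑ j, v i * R i j * v j = ∑ i, v i * (R *ᵥ v) i := by
    apply Finset.sum_congr rfl
    intro i _
    rw [mulVec, dotProduct, Finset.mul_sum]
    exact Finset.sum_congr rfl fun j _ => by ring
  rw [h1]
  have h2 := repr_dot hH.eigenvectorBasis (WithLp.toLp 2 v)
    (WithLp.toLp 2 (R *ᵥ v : Fin q → ℝ))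
  simp only [WithLp.ofLp_toLp] at h2
  rw [h2]
  apply Finset.sum_congr rfl
  intro i _
  rw [repr_mulVec hH hsymm]
  ring

lemma charpoly_diag {q : ℕ} (d : Fin q → ℝ) :
    (Matrix.diagonal d).charpoly = ∏ i, (X - C (d i)) := by
  unfold Matrix.charpoly
  have : charmatrix (Matrix.diagonal d) = Matrix.diagonal (fun i => X - C (d i)) := by
    ext i j
    by_cases h : i = j
    · subst h; simp
    · simp [h, Matrix.diagonal_apply_ne _ h]
  rw [this, Matrix.det_diagonal]

lemma charpoly_herm {q : ℕ} {R : Matrix (Fin q) (Fin q) ℝ} (hH : R.IsHermitian) :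
    R.charpoly = ∏ i, (X - C (hH.eigenvalues i)) := by
  have hspec := hH.spectral_theorem
  rw [Unitary.conjStarAlgAut_apply] at hspec
  set U : Matrix (Fin q) (Fin q) ℝ := (hH.eigenvectorUnitary : Matrix (Fin q) (Fin q) ℝ) with hU
  have hU1 : U * star U = 1 := Matrix.mem_unitaryGroup_iff.mp hH.eigenvectorUnitary.2
  set D : Matrix (Fin q) (Fin q) ℝ := Matrix.diagonal (RCLike.ofReal ∘ hH.eigenvalues) with hD
  have hDd : D = Matrix.diagonal hH.eigenvalues := by rw [hD]; congr 1
  set mC : Matrix (Fin q) (Fin q) ℝ →+* Matrix (Fin q) (Fin q) ℝ[X] :=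
    (C : ℝ →+* ℝ[X]).mapMatrix with hmC
  have key : charmatrix R = (mC U) * charmatrix D * (mC (star U)) := by
    unfold charmatrix
    rw [Matrix.mul_sub, Matrix.sub_mul]
    congr 1
    · have hc : mC U * Matrix.scalar (Fin q) (X : ℝ[X]) =
          Matrix.scalar (Fin q) (X : ℝ[X]) * mC U :=
        (Matrix.scalar_commute (X : ℝ[X]) (fun r => Commute.all _ _) (mC U)).symm.eq
      rw [hc, mul_assoc, ← mC.map_mul, hU1, mC.map_one, mul_one]
    · show (C : ℝ →+* ℝ[X]).mapMatrix R = _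
      rw [← mC.map_mul, ← mC.map_mul, ← hspec]
  have hdet := congrArg Matrix.det key
  rw [Matrix.charpoly, hdet, Matrix.det_mul, Matrix.det_mul, mul_comm, ← mul_assoc,
    ← Matrix.det_mul, ← mC.map_mul]
  have hU2 : star U * U = 1 := Matrix.mem_unitaryGroup_iff'.mp hH.eigenvectorUnitary.2
  rw [hU2, mC.map_one, Matrix.det_one, one_mul, ← Matrix.charpoly, hDd, charpoly_diag]

lemma entropy_gt {q : ℕ} (hq : 2 ≤ q) (x : Fin q → ℝ) (hx : ∀ i, 0 ≤ x i)
    (hsum : ∑ i, x i = 1) (hne : x ≠ fun _ => 1/(q:ℝ)) :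
    Real.log (1/(q:ℝ)) < ∑ i, x i * Real.log (x i) := by
  have hq0 : (0:ℝ) < q := by positivity
  have hp : ∃ j ∈ Finset.univ, ∃ k ∈ Finset.univ, x j ≠ x k := by
    by_contra h
    push_neg at h
    apply hne
    funext i
    have hconst : ∀ j, x j = x i := fun j => h j (Finset.mem_univ j) i (Finset.mem_univ i)
    have : ∑ j, x j = (q:ℝ) * x i := by
      rw [Finset.sum_congr rfl (fun j _ => hconst j)]
      simp [Finset.card_univ, mul_comm]
    rw [hsum] at this
    field_simp
    linarith
  have h := Real.strictConvexOn_mul_log.map_sum_lt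
    (w := fun _ : Fin q => 1/(q:ℝ)) (p := x) (t := Finset.univ)
    (fun i _ => by positivity)
    (by simp [Finset.card_univ]; field_simp)
    (fun i _ => Set.mem_Ici.mpr (hx i)) hp
  have hL : ∑ i, (1/(q:ℝ)) • x i = 1/(q:ℝ) := by
    simp only [smul_eq_mul, ← Finset.mul_sum, hsum, mul_one]
  rw [hL] at h
  simp only [smul_eq_mul, ← Finset.mul_sum] at h
  exact (mul_lt_mul_iff_right₀ (by positivity : (0:ℝ) < 1/(q:ℝ))).mp h

/-- Key bound: on the simplex, the quadratic form is at most `lam₁ / q`, and `lam₁ > 0`. -/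
lemma quad_le_lam_div_q {q : ℕ} (hq : 2 ≤ q) {R : Matrix (Fin q) (Fin q) ℝ}
    (hsymm : R.IsSymm)
    (lam : Fin q → ℝ) (hanti : Antitone lam)
    (hspec : R.charpoly = ∏ i : Fin q, (X - C (lam i)))
    (hone : R *ᵥ (fun _ => (1 : ℝ)) = lam ⟨0, lt_of_lt_of_le two_pos hq⟩ • (fun _ => (1 : ℝ)))
    (hneg : ∀ i : Fin q, i ≠ ⟨0, lt_of_lt_of_le two_pos hq⟩ → lam i ≤ 0)
    (x : Fin q → ℝ) (hsum : ∑ i, x i = 1)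
    (hpos : 0 < ∑ i, ∑ j, x i * R i j * x j) :
    0 < lam ⟨0, lt_of_lt_of_le two_pos hq⟩ ∧
      ∑ i, ∑ j, x i * R i j * x j ≤ lam ⟨0, lt_of_lt_of_le two_pos hq⟩ / q := by
  classical
  have hq0 : (0:ℝ) < q := by positivity
  set i0 : Fin q := ⟨0, lt_of_lt_of_le two_pos hq⟩ with hi0
  set lam1 : ℝ := lam i0 with hlam1
  have hH : R.IsHermitian := by
    rw [Matrix.IsHermitian, conjTranspose]
    ext i j; simpa using congrFun (congrFun hsymm.eq i) j
  set μ : Fin q → ℝ := hH.eigenvalues with hμ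
  set B := hH.eigenvectorBasis with hB
  -- multiset of eigenvalues equals multiset of lam
  have hmeq : Multiset.map μ Finset.univ.val = Multiset.map lam Finset.univ.val := by
    have h1 : R.charpoly
        = (Multiset.map (fun a => X - C a) (Multiset.map μ Finset.univ.val)).prod := by
      rw [charpoly_herm hH, Finset.prod, Multiset.map_map]; rfl
    have h2 : R.charpoly
        = (Multiset.map (fun a => X - C a) (Multiset.map lam Finset.univ.val)).prod := by
      rw [hspec, Finset.prod, Multiset.map_map]; rfl
    have h3 := h1.symm.trans h2
    have := congrArg Polynomial.roots h3
    rwa [Polynomial.roots_multiset_prod_X_sub_C, Polynomial.roots_multiset_prod_X_sub_C] at this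
  -- each eigenvalue is some lam j
  have hmem : ∀ i, ∃ j, μ i = lam j := by
    intro i
    have : μ i ∈ Multiset.map lam Finset.univ.val := by
      rw [← hmeq]
      exact Multiset.mem_map_of_mem μ (Finset.mem_univ i)
    obtain ⟨j, _, hj⟩ := Multiset.mem_map.mp this
    exact ⟨j, hj.symm⟩
  set w : Fin q → ℝ := fun i => B.repr (WithLp.toLp 2 x) i with hw
  have hquad : ∑ i, ∑ j, x i * R i j * x j = ∑ i, μ i * (w i)^2 :=
    quad_eq_sum hH hsymm x
  -- lam1 > 0
  have hlam1pos : 0 < lam1 := by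
    by_contra hle
    push_neg at hle
    have hall : ∀ i, μ i ≤ 0 := by
      intro i
      obtain ⟨j, hj⟩ := hmem i
      have : lam j ≤ lam1 := hanti (Fin.mk_le_mk.mpr (Nat.zero_le _) : i0 ≤ j)
      linarith [hj ▸ this]
    have : ∑ i, ∑ j, x i * R i j * x j ≤ 0 := by
      rw [hquad]
      apply Finset.sum_nonpos
      intro i _
      exact mul_nonpos_of_nonpos_of_nonneg (hall i) (sq_nonneg _)
    linarith
  refine ⟨hlam1pos, ?_⟩
  -- counting positive eigenvalues
  have hcard : (Finset.univ.filter (fun i => 0 < μ i)).card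
      = (Finset.univ.filter (fun j => 0 < lam j)).card := by
    have h1 := congrArg (Multiset.countP (fun t : ℝ => 0 < t)) hmeq
    rwa [Multiset.countP_map, Multiset.countP_map, ← Finset.filter_val, ← Finset.filter_val]
      at h1
  have hcard1 : (Finset.univ.filter (fun j => 0 < lam j)).card ≤ 1 := by
    apply Finset.card_le_one.mpr
    intro a ha b hb
    simp only [Finset.mem_filter] at ha hb
    have ha' : a = i0 := by
      by_contra h; exact absurd ha.2 (not_lt.mpr (hneg a h))
    have hb' : b = i0 := by
      by_contra h; exact absurd hb.2 (not_lt.mpr (hneg b h))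
    rw [ha', hb']
  -- the index i₀ achieving lam1
  obtain ⟨iₒ, hiₒ⟩ : ∃ i, μ i = lam1 := by
    have : lam1 ∈ Multiset.map μ Finset.univ.val := by
      rw [hmeq]
      exact Multiset.mem_map_of_mem lam (Finset.mem_univ i0)
    obtain ⟨i, _, hi⟩ := Multiset.mem_map.mp this
    exact ⟨i, hi⟩
  -- all other eigenvalues are ≤ 0
  have hother : ∀ i, i ≠ iₒ → μ i ≤ 0 := by
    intro i hne
    by_contra h
    push_neg at h
    have h2 : 1 < (Finset.univ.filter (fun i => 0 < μ i)).card := by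
      apply Finset.one_lt_card.mpr
      exact ⟨i, Finset.mem_filter.mpr ⟨Finset.mem_univ _, h⟩,
        iₒ, Finset.mem_filter.mpr ⟨Finset.mem_univ _, hiₒ ▸ hlam1pos⟩, hne⟩
    omega
  -- coordinates of the all-ones vector
  set ones : EuclideanSpace ℝ (Fin q) := WithLp.toLp 2 (fun _ => (1:ℝ) : Fin q → ℝ) with hones
  set o : Fin q → ℝ := fun i => B.repr ones i with ho
  have honeE : (WithLp.toLp 2 (R *ᵥ (fun _ => (1:ℝ)) : Fin q → ℝ))
      = lam1 • ones := by rw [hone, WithLp.toLp_smul]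
  have hoeig : ∀ i, μ i * o i = lam1 * o i := by
    intro i
    have h2 := repr_mulVec hH hsymm ones i
    rw [honeE, _root_.map_smul] at h2
    simpa using h2.symm
  have hozero : ∀ i, i ≠ iₒ → o i = 0 := by
    intro i hne
    have h1 := hoeig i
    have h2 : μ i ≠ lam1 := by
      have := hother i hne
      linarith
    have : (μ i - lam1) * o i = 0 := by ring_nf; linarith [h1]
    rcases mul_eq_zero.mp this with h | h
    · exact absurd (by linarith : μ i = lam1) h2
    · exact h
  -- inner products
  have hd1 : ∑ i, o i * w i = 1 := by
    have h := repr_dot B ones (WithLp.toLp 2 x)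
    simp only [hones, WithLp.ofLp_toLp, one_mul] at h
    rw [← h]
    exact hsum
  have hd2 : ∑ i, o i * o i = q := by
    have h := repr_dot B ones ones
    simp only [hones, WithLp.ofLp_toLp, one_mul] at h
    rw [← h]
    simp [Finset.card_univ]
  have hs1 : o iₒ * w iₒ = 1 := by
    rw [← hd1]
    symm
    apply Finset.sum_eq_single_of_mem iₒ (Finset.mem_univ iₒ)
    intro i _ hne
    rw [hozero i hne, zero_mul]
  have hs2 : o iₒ * o iₒ = q := by
    rw [← hd2]
    symm
    apply Finset.sum_eq_single_of_mem iₒ (Finset.mem_univ iₒ)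
    intro i _ hne
    rw [hozero i hne, zero_mul]
  have hwsq : (w iₒ)^2 = 1 / q := by
    have h1 : (o iₒ * w iₒ)^2 = 1 := by rw [hs1]; norm_num
    have h2 : (o iₒ)^2 * (w iₒ)^2 = 1 := by rw [← mul_pow]; exact h1
    have h3 : (o iₒ)^2 = q := by rw [sq]; exact hs2
    rw [h3] at h2
    field_simp
    linarith
  rw [hquad]
  calc ∑ i, μ i * (w i)^2 ≤ ∑ i, (if i = iₒ then lam1 / q else 0) := by
        apply Finset.sum_le_sum
        intro i _
        by_cases h : i = iₒ
        · subst h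
          rw [if_pos rfl, hiₒ, hwsq]
          rw [mul_one_div]
        · rw [if_neg h]
          exact mul_nonpos_of_nonpos_of_nonneg (hother i h) (sq_nonneg _)
    _ = lam1 / q := by rw [Finset.sum_ite_eq' Finset.univ iₒ]; simp

end PhiAux

theorem Phi_strict_global_min_at_barycenter (q : ℕ) (hq : 2 ≤ q)
    (R : Matrix (Fin q) (Fin q) ℝ) (hsymm : R.IsSymm)
    (hnonneg : ∀ i j, 0 ≤ R i j) (hirr : MatrixIrreducible R)
    (lam : Fin q → ℝ) (hanti : Antitone lam)
    (hspec : R.charpoly = ∏ i : Fin q, (Polynomial.X - Polynomial.C (lam i)))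
    (hone : R *ᵥ (fun _ => (1 : ℝ)) = lam ⟨0, by omega⟩ • (fun _ => (1 : ℝ)))
    (hneg : ∀ i : Fin q, i ≠ ⟨0, by omega⟩ → lam i ≤ 0)
    (c : ℝ) (hc : 0 < c) :
    ∀ x : Fin q → ℝ, (∀ i, 0 ≤ x i) → ∑ i, x i = 1 →
      0 < (∑ i, ∑ j, x i * R i j * x j) →
      x ≠ (fun _ => 1 / (q : ℝ)) →
      PhiOne R c (fun _ => 1 / (q : ℝ)) < PhiOne R c x := by
  intro x hx hsum hpos hne
  have hq0 : (0:ℝ) < q := by positivity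
  obtain ⟨hlam1pos, hbound⟩ := quad_le_lam_div_q hq hsymm lam hanti hspec hone hneg x hsum hpos
  set lam1 : ℝ := lam ⟨0, by omega⟩ with hlam1
  have hQbar : ∑ i : Fin q, ∑ j, (1/(q:ℝ)) * R i j * (1/(q:ℝ)) = lam1 / q := by
    have h1 : ∀ i : Fin q, ∑ j, (1/(q:ℝ)) * R i j * (1/(q:ℝ))
        = (1/(q:ℝ)) * (1/(q:ℝ)) * lam1 := by
      intro i
      have h2 : (R *ᵥ (fun _ => (1:ℝ))) i = lam1 := by
        rw [hone]; simp
      have h3 : ∑ j, R i j = lam1 := by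
        rw [← h2]; simp [mulVec, dotProduct]
      rw [show (∑ j, (1/(q:ℝ)) * R i j * (1/(q:ℝ)))
          = (1/(q:ℝ)) * (1/(q:ℝ)) * ∑ j, R i j by
        rw [Finset.mul_sum]; exact Finset.sum_congr rfl fun j _ => by ring, h3]
    rw [Finset.sum_congr rfl fun i _ => h1 i]
    rw [Finset.sum_const, Finset.card_univ, Fintype.card_fin, nsmul_eq_mul]
    field_simp
  have hbar : PhiOne R c (fun _ => 1/(q:ℝ))
      = Real.log (1/(q:ℝ)) - c * Real.log (lam1 / q) := by
    unfold PhiOne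
    rw [hQbar]
    congr 1
    rw [Finset.sum_const, Finset.card_univ, Fintype.card_fin, nsmul_eq_mul]
    field_simp
  have hE := entropy_gt hq x hx hsum hne
  have hlog : Real.log (∑ i, ∑ j, x i * R i j * x j) ≤ Real.log (lam1/q) :=
    Real.log_le_log hpos hbound
  have hcl : c * Real.log (∑ i, ∑ j, x i * R i j * x j) ≤ c * Real.log (lam1/q) :=
    mul_le_mul_of_nonneg_left hlog (le_of_lt hc)
  rw [hbar]
  unfold PhiOne
  linarith
end

section
/- Let q ≥ 2 be an integer, let R be a symmetric q×q real matrix with R𝟙 = λ₁𝟙 for some λ₁ ≠ 0, where 𝟙 is the all-ones vector, let c be a real number with c ≠ 1/2, and let E be the q×(q−1) real matrix whose j-th column is e_j − e_q. Then (1 − 2c) · det( Eᵀ( q·I − (2cq/λ₁)·R )E ) = q^q · det( I − (2c/λ₁)·R ). -/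
open Matrix

lemma Emat_colsum (q : ℕ) (hq : 2 ≤ q) (j : Fin (q - 1)) :
    ∑ i : Fin q, Emat q i j = 0 := by
  have hj : (j : ℕ) < q - 1 := j.isLt
  have hjq : (j : ℕ) < q := lt_of_lt_of_le hj (Nat.sub_le q 1)
  have hlast : q - 1 < q := Nat.sub_lt (by omega) one_pos
  have hne : (⟨(j : ℕ), hjq⟩ : Fin q) ≠ ⟨q - 1, hlast⟩ := by
    intro h
    have := congrArg Fin.val h
    simp at this; omega
  have hfun : ∀ i : Fin q, Emat q i j =
      (if i = (⟨(j : ℕ), hjq⟩ : Fin q) then (1 : ℝ) else 0) +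
      (if i = (⟨q - 1, hlast⟩ : Fin q) then (-1 : ℝ) else 0) := by
    intro i
    unfold Emat
    by_cases h1 : (i : ℕ) = (j : ℕ)
    · have : i = (⟨(j : ℕ), hjq⟩ : Fin q) := Fin.ext h1
      subst this
      simp [h1, hne]
    · have h1' : i ≠ (⟨(j : ℕ), hjq⟩ : Fin q) := by
        intro h; apply h1; exact congrArg Fin.val h
      by_cases h2 : (i : ℕ) = q - 1
      · have hi : i = (⟨q - 1, hlast⟩ : Fin q) := Fin.ext h2
        have hq1j : q - 1 ≠ (j : ℕ) := by omega
        simp [h1, h2, h1', hi, hq1j]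
      · have h2' : i ≠ (⟨q - 1, hlast⟩ : Fin q) := by
          intro h; apply h2; exact congrArg Fin.val h
        simp [h1, h2, h1', h2']
  rw [Finset.sum_congr rfl (fun i _ => hfun i), Finset.sum_add_distrib]
  simp

theorem det_Hessian_at_barycenter (q : ℕ) (hq : 2 ≤ q)
    (R : Matrix (Fin q) (Fin q) ℝ) (hsymm : R.IsSymm)
    (lam1 : ℝ) (hlam1 : lam1 ≠ 0)
    (hone : R *ᵥ (fun _ => (1 : ℝ)) = lam1 • (fun _ => (1 : ℝ)))
    (c : ℝ) (hc : c ≠ 1 / 2) :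
    (1 - 2 * c) *
        ((Emat q)ᵀ *
          ((q : ℝ) • (1 : Matrix (Fin q) (Fin q) ℝ) - (2 * c * q / lam1) • R) *
          Emat q).det =
      (q : ℝ) ^ q *
        ((1 : Matrix (Fin q) (Fin q) ℝ) - (2 * c / lam1) • R).det := by
  set M : Matrix (Fin q) (Fin q) ℝ :=
    (q : ℝ) • (1 : Matrix (Fin q) (Fin q) ℝ) - (2 * c * q / lam1) • R with hM
  set A : Matrix (Fin q) (Fin q) ℝ :=
    (1 : Matrix (Fin q) (Fin q) ℝ) - (2 * c / lam1) • R with hA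
  set s : ℝ := (q : ℝ) * (1 - 2 * c) with hs
  -- row sums of R
  have hRrow : ∀ i : Fin q, ∑ j : Fin q, R i j = lam1 := by
    intro i
    have := congrFun hone i
    simpa [Matrix.mulVec, dotProduct] using this
  have hRcol : ∀ j : Fin q, ∑ i : Fin q, R i j = lam1 := by
    intro j
    have : ∑ i : Fin q, R i j = ∑ i : Fin q, R j i := by
      apply Finset.sum_congr rfl
      intro i _
      have := congrFun (congrFun hsymm.eq j) i
      simpa [Matrix.transpose_apply] using this
    rw [this]; exact hRrow j
  -- row sums of M
  have hdivcancel : 2 * c * q / lam1 * lam1 = 2 * c * q := by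
    field_simp
  have hMrow : ∀ i : Fin q, ∑ j : Fin q, M i j = s := by
    intro i
    simp only [hM, Matrix.sub_apply, Matrix.smul_apply, Matrix.one_apply, smul_eq_mul]
    rw [Finset.sum_sub_distrib, ← Finset.mul_sum, ← Finset.mul_sum]
    rw [hRrow i]
    simp [hdivcancel, hs]
    ring
  have hMcol : ∀ j : Fin q, ∑ i : Fin q, M i j = s := by
    intro j
    simp only [hM, Matrix.sub_apply, Matrix.smul_apply, Matrix.one_apply, smul_eq_mul]
    rw [Finset.sum_sub_distrib, ← Finset.mul_sum, ← Finset.mul_sum]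
    rw [hRcol j]
    have h1 : ∑ i : Fin q, (if i = j then (1:ℝ) else 0) = 1 :=
      Finset.sum_ite_eq' Finset.univ j (fun _ => (1:ℝ)) |>.trans (by simp)
    rw [h1, hs]; field_simp
  -- the bordered matrix
  set P : Matrix (Fin q) (Fin (q - 1) ⊕ Fin 1) ℝ :=
    Matrix.of (fun i x => Sum.elim (fun j => Emat q i j) (fun _ => (1 : ℝ)) x) with hP
  have key : Pᵀ * M * P =
      Matrix.fromBlocks ((Emat q)ᵀ * M * Emat q) 0 0 (((q : ℝ) * s) • 1) := by
    ext x y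
    cases x with
    | inl a =>
      cases y with
      | inl b =>
        simp [Matrix.mul_apply, hP, Matrix.fromBlocks]
      | inr b =>
        simp only [Matrix.mul_apply, hP, Matrix.of_apply, Sum.elim_inl, Sum.elim_inr,
          Matrix.transpose_apply, Matrix.fromBlocks, Matrix.zero_apply, mul_one]
        rw [Finset.sum_comm]
        have : ∀ i : Fin q, ∑ j : Fin q, Emat q i a * M i j = Emat q i a * s := by
          intro i; rw [← Finset.mul_sum, hMrow i]
        rw [Finset.sum_congr rfl (fun i _ => this i), ← Finset.sum_mul,
          Emat_colsum q hq a, zero_mul]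
    | inr a =>
      cases y with
      | inl b =>
        simp only [Matrix.mul_apply, hP, Matrix.of_apply, Sum.elim_inl, Sum.elim_inr,
          Matrix.transpose_apply, Matrix.fromBlocks, Matrix.zero_apply, one_mul]
        have : ∀ j : Fin q, (∑ i : Fin q, M i j) * Emat q j b = s * Emat q j b := by
          intro j; rw [hMcol j]
        rw [Finset.sum_congr rfl (fun j _ => this j), ← Finset.mul_sum,
          Emat_colsum q hq b, mul_zero]
      | inr b =>
        simp only [Matrix.mul_apply, hP, Matrix.of_apply, Sum.elim_inr,
          Matrix.transpose_apply, Matrix.fromBlocks, one_mul, mul_one,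
          Matrix.smul_apply, Matrix.one_apply, smul_eq_mul]
        have ha : a = b := Subsingleton.elim a b
        rw [Finset.sum_congr rfl (fun j (_: j ∈ Finset.univ) => hMcol j)]
        simp [ha, mul_comm]
  -- square bordered matrix via reindexing
  have hq1 : q - 1 + 1 = q := by omega
  set σ : (Fin (q - 1) ⊕ Fin 1) ≃ Fin q := finSumFinEquiv.trans (finCongr hq1) with hσ
  set Psq : Matrix (Fin q) (Fin q) ℝ := P.submatrix id ⇑σ.symm with hPsq
  have hconj : Psqᵀ * M * Psq = (Pᵀ * M * P).submatrix ⇑σ.symm ⇑σ.symm := by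
    ext x y
    simp [Matrix.mul_apply, Matrix.submatrix_apply, Matrix.transpose_apply, hPsq]
  have hσl : ∀ a : Fin (q - 1), ((σ (Sum.inl a) : Fin q) : ℕ) = (a : ℕ) := by
    intro a; simp [hσ, finSumFinEquiv_apply_left]
  have hσr : ∀ k : Fin 1, ((σ (Sum.inr k) : Fin q) : ℕ) = q - 1 := by
    intro k
    have : k = 0 := Subsingleton.elim k 0
    subst this
    simp [hσ, finSumFinEquiv_apply_right]
  set FB : Matrix (Fin (q - 1) ⊕ Fin 1) (Fin (q - 1) ⊕ Fin 1) ℝ :=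
    Matrix.fromBlocks (1 : Matrix (Fin (q - 1)) (Fin (q - 1)) ℝ)
      (Matrix.of fun _ _ => (1 : ℝ)) (Matrix.of fun _ _ => (-1 : ℝ))
      (1 : Matrix (Fin 1) (Fin 1) ℝ) with hFB
  have hPF : ∀ x y, P (σ x) y = FB x y := by
    intro x y
    cases x with
    | inl a =>
      cases y with
      | inl b =>
        have ha : ((σ (Sum.inl a) : Fin q) : ℕ) = (a : ℕ) := hσl a
        have hlt : (a : ℕ) < q - 1 := a.isLt
        simp only [hP, hFB, Matrix.of_apply, Sum.elim_inl, Matrix.fromBlocks,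
          Sum.elim_inl, Emat, ha]
        by_cases hab : (a : ℕ) = (b : ℕ)
        · have : a = b := Fin.ext hab
          simp [hab, this, Matrix.one_apply]
        · have : a ≠ b := fun h => hab (congrArg Fin.val h)
          have hne2 : (a : ℕ) ≠ q - 1 := by omega
          simp [hab, this, hne2, Matrix.one_apply]
      | inr b =>
        simp [hP, hFB, Matrix.fromBlocks]
    | inr k =>
      cases y with
      | inl b =>
        have hk : ((σ (Sum.inr k) : Fin q) : ℕ) = q - 1 := hσr k
        have hlt : (b : ℕ) < q - 1 := b.isLt
        have h1 : q - 1 ≠ (b : ℕ) := by omega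
        simp [hP, hFB, Matrix.fromBlocks, Emat, hk, h1]
      | inr b =>
        have : k = b := Subsingleton.elim k b
        simp [hP, hFB, Matrix.fromBlocks, this, Matrix.one_apply]
  have hPsqFB : Psq = FB.submatrix ⇑σ.symm ⇑σ.symm := by
    ext i j
    have := hPF (σ.symm i) (σ.symm j)
    rw [Equiv.apply_symm_apply] at this
    simpa [hPsq, Matrix.submatrix_apply] using this
  have hdetPsq : Psq.det = (q : ℝ) := by
    rw [hPsqFB, Matrix.det_submatrix_equiv_self, hFB, Matrix.det_fromBlocks_one₁₁,
      Matrix.det_fin_one]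
    have hcast : ((q - 1 : ℕ) : ℝ) = (q : ℝ) - 1 := by
      have : (1 : ℕ) ≤ q := by omega
      push_cast [this]; ring
    simp [Matrix.mul_apply, Matrix.one_apply, Fintype.card_fin, hcast]
  -- determinant bookkeeping
  have hdet1 : (Psqᵀ * M * Psq).det = (Pᵀ * M * P).det := by
    rw [hconj]; exact Matrix.det_submatrix_equiv_self σ.symm _
  have E1 : Psq.det * M.det * Psq.det =
      ((Emat q)ᵀ * M * Emat q).det * ((q : ℝ) * s) := by
    have l := hdet1
    rw [key, Matrix.det_fromBlocks_zero₂₁, Matrix.det_mul, Matrix.det_mul,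
      Matrix.det_transpose] at l
    rw [l]
    congr 1
    rw [Matrix.det_smul, Matrix.det_one, Fintype.card_fin]
    ring
  have hMA : M = (q : ℝ) • A := by
    rw [hM, hA, smul_sub, smul_smul]
    congr 2
    ring
  have hdetM : M.det = (q : ℝ) ^ q * A.det := by
    rw [hMA, Matrix.det_smul, Fintype.card_fin]
  have hq0 : (q : ℝ) ≠ 0 := by
    have : (0 : ℕ) < q := by omega
    exact_mod_cast this.ne'
  rw [hdetPsq, hdetM, hs] at E1
  have h2 : (q : ℝ) ^ 2 * ((1 - 2 * c) * ((Emat q)ᵀ * M * Emat q).det) =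
      (q : ℝ) ^ 2 * ((q : ℝ) ^ q * A.det) := by
    nlinarith [E1]
  exact mul_left_cancel₀ (pow_ne_zero 2 hq0) h2
end
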